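/- arXiv:2312.13965 — 2 statements merged into one kernel-verified Lean document; each statement's English description precedes it below -/
import Mathlib

section
/- For every even q ≥ 2, if the coloring φ_q of the triples of {0, 1, …, 2^{2^{q/2}} − 1} contains a monochromatic copy of a 3-graph G (i.e., there is an injection of V(G) into {0, …, 2^{2^{q/2}} − 1} under which all edges of G receive the same φ_q-color), then G ∈ U. -/
/-- A 3-uniform hypergraph with vertices drawn from ℕ. -/
structure ThreeGraph where
  verts : Finset ℕ
  edges : Finset (Finset ℕ)
  edge_card : ∀ e ∈ edges, e.card = 3
  edge_sub : ∀ e ∈ edges, e ⊆ verts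

/-- A 3-graph is tripartite if its vertex set can be partitioned into three parts so that
every edge has exactly one vertex in each part. -/
def Tripartite (G : ThreeGraph) : Prop :=
  ∃ V1 V2 V3 : Finset ℕ,
    Disjoint V1 V2 ∧ Disjoint V1 V3 ∧ Disjoint V2 V3 ∧
    V1 ∪ V2 ∪ V3 = G.verts ∧
    ∀ e ∈ G.edges, (e ∩ V1).card = 1 ∧ (e ∩ V2).card = 1 ∧ (e ∩ V3).card = 1

/-- Membership in the family 𝒰₁: there is a vertex subset intersecting every edge in
exactly one vertex. -/
def InU1 (G : ThreeGraph) : Prop :=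
  ∃ W : Finset ℕ, W ⊆ G.verts ∧ ∀ e ∈ G.edges, (e ∩ W).card = 1

/-- `Reducible G H F` : `G` is reducible to the pair `(H, F)` by collapsing a collapsible
set `U` (with `F = G[U]`), where the new vertex of `H` is `v`. -/
def Reducible (G H F : ThreeGraph) : Prop :=
  ∃ (U : Finset ℕ) (v : ℕ),
    U ⊆ G.verts ∧ 2 ≤ U.card ∧ U.card < G.verts.card ∧
    (∀ e ∈ G.edges, (e ∩ U).card ≠ 2) ∧
    v ∉ G.verts ∧
    H.verts = (G.verts \ U) ∪ {v} ∧
    H.edges = G.edges.filter (fun e => e ∩ U = ∅) ∪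
      (G.edges.filter (fun e => (e ∩ U).card = 1)).image (fun e => (e \ U) ∪ {v}) ∧
    F.verts = U ∧
    F.edges = G.edges.filter (fun e => e ⊆ U)

/-- `MemU i G` means `G ∈ 𝒰ᵢ`: `𝒰₀` is the family of tripartite 3-graphs, `𝒰₁` of 3-graphs
with a vertex set meeting every edge exactly once, the families are nested, and for `i ≥ 2`,
`G ∈ 𝒰ᵢ` whenever `G` is reducible to `(H, F)` with `H ∈ 𝒰ᵢ₋₁` and `F ∈ 𝒰ᵢ`. -/
inductive MemU : ℕ → ThreeGraph → Prop where
  | zero (G : ThreeGraph) : Tripartite G → MemU 0 G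
  | one (G : ThreeGraph) : InU1 G → MemU 1 G
  | mono (i : ℕ) (G : ThreeGraph) : MemU i G → MemU (i + 1) G
  | reduce (i : ℕ) (G H F : ThreeGraph) :
      Reducible G H F → MemU (i + 1) H → MemU (i + 2) F → MemU (i + 2) G

/-- `G ∈ 𝒰 = ⋃ᵢ 𝒰ᵢ`. -/
def InU (G : ThreeGraph) : Prop := ∃ i, MemU i G

/-- A monochromatic copy of `G` in color `i` under the coloring `χ` of the triples of
`Fin N`. -/
def MonoCopy {N q : ℕ} (χ : Finset (Fin N) → Fin q) (i : Fin q) (G : ThreeGraph) : Prop :=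
  ∃ f : ℕ → Fin N, Set.InjOn f ↑G.verts ∧ ∀ e ∈ G.edges, χ (e.image f) = i

/-- `N` vertices suffice to find, in any `q`-coloring, a monochromatic copy of `Gs i` in
color `i` for some `i`. -/
def RamseyProp {q : ℕ} (Gs : Fin q → ThreeGraph) (N : ℕ) : Prop :=
  ∀ χ : Finset (Fin N) → Fin q, ∃ i : Fin q, MonoCopy χ i (Gs i)

/-- The Ramsey number `r(G₁, …, G_q)`. -/
noncomputable def ramseyNumber {q : ℕ} (Gs : Fin q → ThreeGraph) : ℕ :=
  sInf {N | RamseyProp Gs N}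

/-- The `q`-color Ramsey number `r(G; q)`. -/
noncomputable def rq (G : ThreeGraph) (q : ℕ) : ℕ :=
  ramseyNumber (fun _ : Fin q => G)

/-- `delta x y = max { i | bit(x,i) ≠ bit(y,i) }` (for `x ≠ y`; all differing bits are
at positions at most `max x y`). -/
def delta (x y : ℕ) : ℕ :=
  Nat.findGreatest (fun i => Nat.testBit x i ≠ Nat.testBit y i) (max x y)

/-- The stepping-up coloring: for `x < y < z`,
`φ(x,y,z) = (δ(δ(x,y), δ(y,z)), 1[δ(x,y) > δ(y,z)])`. -/
def phiColor (x y z : ℕ) : ℕ × Bool :=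
  (delta (delta x y) (delta y z), decide (delta y z < delta x y))



lemma testBit_div_pow (x s j : ℕ) : (x / 2^s).testBit j = x.testBit (s + j) := by
  rw [← Nat.shiftRight_eq_div_pow, Nat.testBit_shiftRight]

lemma delta_comm (x y : ℕ) : delta x y = delta y x := by
  unfold delta
  rw [max_comm]
  congr 1
  ext i
  exact ne_comm

lemma delta_self (x : ℕ) : delta x x = 0 := by
  unfold delta
  simp [Nat.findGreatest_eq_zero_iff]

lemma testBit_eq_of_delta_lt {x y i : ℕ} (h : delta x y < i) : x.testBit i = y.testBit i := by
  by_cases hle : i ≤ max x y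
  · have := Nat.findGreatest_is_greatest (P := fun i => Nat.testBit x i ≠ Nat.testBit y i) h hle
    simpa using this
  · push_neg at hle
    have hx : x < 2^i := lt_of_le_of_lt (le_max_left x y) (lt_of_lt_of_le hle (Nat.le_of_lt (Nat.lt_two_pow_self (n := i))))
    have hy : y < 2^i := lt_of_le_of_lt (le_max_right x y) (lt_of_lt_of_le hle (Nat.le_of_lt (Nat.lt_two_pow_self (n := i))))
    rw [Nat.testBit_lt_two_pow hx, Nat.testBit_lt_two_pow hy]

lemma testBit_delta_ne {x y : ℕ} (h : x ≠ y) : x.testBit (delta x y) ≠ y.testBit (delta x y) := by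
  have ⟨i, hi⟩ : ∃ i, x.testBit i ≠ y.testBit i := by
    by_contra hc
    push_neg at hc
    exact h (Nat.eq_of_testBit_eq hc)
  have hib : i ≤ max x y := by
    by_contra hgt
    push_neg at hgt
    have hx : x < 2^i := lt_of_le_of_lt (le_max_left x y) (lt_of_lt_of_le hgt (Nat.le_of_lt (Nat.lt_two_pow_self (n := i))))
    have hy : y < 2^i := lt_of_le_of_lt (le_max_right x y) (lt_of_lt_of_le hgt (Nat.le_of_lt (Nat.lt_two_pow_self (n := i))))
    rw [Nat.testBit_lt_two_pow hx, Nat.testBit_lt_two_pow hy] at hi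
    exact hi rfl
  exact Nat.findGreatest_spec (P := fun i => Nat.testBit x i ≠ Nat.testBit y i) hib hi

/-- characterization of delta -/
lemma delta_eq_of {x y d : ℕ} (hne : x ≠ y) (hd : x.testBit d ≠ y.testBit d)
    (hup : ∀ i, d < i → x.testBit i = y.testBit i) : delta x y = d := by
  rcases lt_trichotomy (delta x y) d with h | h | h
  · exact absurd (testBit_eq_of_delta_lt h) hd
  · exact h
  · exact absurd (hup _ h) (testBit_delta_ne hne)

lemma delta_bits {x y : ℕ} (h : x < y) :
    x.testBit (delta x y) = false ∧ y.testBit (delta x y) = true := by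
  have hne := testBit_delta_ne (Nat.ne_of_lt h)
  rcases hbx : x.testBit (delta x y) with _ | _ <;> rcases hby : y.testBit (delta x y) with _ | _
  · rw [hbx, hby] at hne; exact absurd rfl hne
  · exact ⟨rfl, rfl⟩
  · exfalso
    have : y < x := Nat.lt_of_testBit (delta x y) hby hbx
      (fun j hj => (testBit_eq_of_delta_lt hj).symm)
    omega
  · rw [hbx, hby] at hne; exact absurd rfl hne

lemma delta_ne_of_lt {x y z : ℕ} (h1 : x < y) (h2 : y < z) : delta x y ≠ delta y z := by
  intro he
  have b1 := (delta_bits h1).2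
  have b2 := (delta_bits h2).1
  rw [he] at b1
  rw [b1] at b2
  exact Bool.noConfusion b2

lemma delta_lt_of_lt {x y n : ℕ} (hne : x ≠ y) (hx : x < 2^n) (hy : y < 2^n) : delta x y < n := by
  by_contra hge
  push_neg at hge
  have hne' := testBit_delta_ne hne
  rw [Nat.testBit_lt_two_pow (lt_of_lt_of_le hx (Nat.pow_le_pow_right (by norm_num) hge)),
    Nat.testBit_lt_two_pow (lt_of_lt_of_le hy (Nat.pow_le_pow_right (by norm_num) hge))] at hne'
  exact hne' rfl

/-- hi parts differ -/
lemma delta_hi {x y s : ℕ} (h : x / 2^s ≠ y / 2^s) :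
    delta x y = s + delta (x / 2^s) (y / 2^s) := by
  have hne : x ≠ y := fun he => h (by rw [he])
  apply delta_eq_of hne
  · rw [show s + delta (x / 2^s) (y / 2^s) = s + delta (x / 2^s) (y / 2^s) from rfl,
      ← testBit_div_pow, ← testBit_div_pow]
    exact testBit_delta_ne h
  · intro i hi
    have hs : s ≤ i := le_trans (Nat.le_add_right s _) (Nat.le_of_lt hi)
    have : x.testBit i = (x / 2^s).testBit (i - s) := by
      rw [testBit_div_pow]; congr 1; omega
    rw [this]
    have : y.testBit i = (y / 2^s).testBit (i - s) := by
      rw [testBit_div_pow]; congr 1; omega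
    rw [this]
    exact testBit_eq_of_delta_lt (by omega)

/-- hi parts equal -/
lemma delta_lo {x y s : ℕ} (h : x / 2^s = y / 2^s) :
    delta x y = delta (x % 2^s) (y % 2^s) := by
  by_cases hne : x = y
  · subst hne; rw [delta_self, delta_self]
  have hm : x % 2^s ≠ y % 2^s := by
    intro hmm
    have h1 := Nat.div_add_mod x (2^s)
    have h2 := Nat.div_add_mod y (2^s)
    rw [h] at h1
    exact hne (by omega)
  have hd : delta (x % 2^s) (y % 2^s) < s :=
    delta_lt_of_lt hm (Nat.mod_lt _ (by positivity)) (Nat.mod_lt _ (by positivity))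
  apply delta_eq_of hne
  · have ex : x.testBit (delta (x % 2^s) (y % 2^s)) = (x % 2^s).testBit (delta (x % 2^s) (y % 2^s)) := by
      rw [Nat.testBit_mod_two_pow]
      simp [hd]
    have ey : y.testBit (delta (x % 2^s) (y % 2^s)) = (y % 2^s).testBit (delta (x % 2^s) (y % 2^s)) := by
      rw [Nat.testBit_mod_two_pow]
      simp [hd]
    rw [ex, ey]
    exact testBit_delta_ne hm
  · intro i hi
    by_cases his : i < s
    · have ex : x.testBit i = (x % 2^s).testBit i := by
        rw [Nat.testBit_mod_two_pow]; simp [his]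
      have ey : y.testBit i = (y % 2^s).testBit i := by
        rw [Nat.testBit_mod_two_pow]; simp [his]
      rw [ex, ey]
      exact testBit_eq_of_delta_lt hi
    · push_neg at his
      have ex : x.testBit i = (x / 2^s).testBit (i - s) := by
        rw [testBit_div_pow]; congr 1; omega
      have ey : y.testBit i = (y / 2^s).testBit (i - s) := by
        rw [testBit_div_pow]; congr 1; omega
      rw [ex, ey, h]

/-- a < 2^p ≤ b < 2^(p+1) implies delta a b = p -/
lemma delta_cross {a b p : ℕ} (ha : a < 2^p) (hb1 : 2^p ≤ b) (hb2 : b < 2^(p+1)) :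
    delta a b = p := by
  apply delta_eq_of (by omega)
  · rw [Nat.testBit_lt_two_pow ha]
    have hd : b / 2^p = 1 := by
      apply Nat.div_eq_of_lt_le (by omega)
      calc b < 2^(p+1) := hb2
      _ = (1+1) * 2^p := by ring
    have hbit : b.testBit p = true := by
      rw [Nat.testBit_eq_decide_div_mod_eq, hd]
      decide
    rw [hbit]
    simp
  · intro i hi
    rw [Nat.testBit_lt_two_pow (by calc a < 2^p := ha
        _ ≤ 2^i := Nat.pow_le_pow_right (by norm_num) (by omega)),
      Nat.testBit_lt_two_pow (by calc b < 2^(p+1) := hb2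
        _ ≤ 2^i := Nat.pow_le_pow_right (by norm_num) (by omega))]


section PhiCases

variable {k X Y Z : ℕ}

lemma hi_lt (hX : X < 2^(2^(k+1))) : X / 2^(2^k) < 2^(2^k) := by
  apply Nat.div_lt_of_lt_mul
  calc X < 2^(2^(k+1)) := hX
  _ = 2^(2^k) * 2^(2^k) := by rw [← pow_add]; congr 1; omega

lemma phi_within (h1 : X / 2^(2^k) = Y / 2^(2^k)) (h2 : Y / 2^(2^k) = Z / 2^(2^k)) :
    phiColor X Y Z = phiColor (X % 2^(2^k)) (Y % 2^(2^k)) (Z % 2^(2^k)) := by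
  unfold phiColor
  rw [delta_lo h1, delta_lo h2]

lemma phi_within_lt (hXY : X < Y) (hYZ : Y < Z)
    (hX : X < 2^(2^k)) (hY : Y < 2^(2^k)) (hZ : Z < 2^(2^k)) :
    (phiColor X Y Z).1 < k := by
  have h1 : delta X Y < 2^k := delta_lt_of_lt (by omega) hX hY
  have h2 : delta Y Z < 2^k := delta_lt_of_lt (by omega) hY hZ
  exact delta_lt_of_lt (delta_ne_of_lt hXY hYZ) h1 h2

lemma phi_cross (h1 : X / 2^(2^k) ≠ Y / 2^(2^k)) (h2 : Y / 2^(2^k) ≠ Z / 2^(2^k))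
    (hX : X < 2^(2^(k+1))) (hY : Y < 2^(2^(k+1))) (hZ : Z < 2^(2^(k+1))) :
    phiColor X Y Z = phiColor (X / 2^(2^k)) (Y / 2^(2^k)) (Z / 2^(2^k)) := by
  have d1lt : delta (X / 2^(2^k)) (Y / 2^(2^k)) < 2^k :=
    delta_lt_of_lt h1 (hi_lt hX) (hi_lt hY)
  have d2lt : delta (Y / 2^(2^k)) (Z / 2^(2^k)) < 2^k :=
    delta_lt_of_lt h2 (hi_lt hY) (hi_lt hZ)
  have e1 : delta X Y = 2^k + delta (X / 2^(2^k)) (Y / 2^(2^k)) := delta_hi h1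
  have e2 : delta Y Z = 2^k + delta (Y / 2^(2^k)) (Z / 2^(2^k)) := delta_hi h2
  unfold phiColor
  rw [e1, e2]
  congr 1
  · have hdiv : ∀ d : ℕ, d < 2^k → (2^k + d) / 2^k = 1 := by
      intro d hd
      apply Nat.div_eq_of_lt_le (by omega)
      omega
    have hmod : ∀ d : ℕ, d < 2^k → (2^k + d) % 2^k = d := by
      intro d hd
      rw [Nat.add_mod_left, Nat.mod_eq_of_lt hd]
    rw [delta_lo (by rw [hdiv _ d1lt, hdiv _ d2lt]), hmod _ d1lt, hmod _ d2lt]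
  · congr 1
    simp only [eq_iff_iff]
    omega

lemma phi_one_lo (h1 : X / 2^(2^k) ≠ Y / 2^(2^k)) (h2 : Y / 2^(2^k) = Z / 2^(2^k))
    (hYZ : Y < Z) (hX : X < 2^(2^(k+1))) (hY : Y < 2^(2^(k+1))) :
    phiColor X Y Z = (k, true) := by
  have d1lt : delta (X / 2^(2^k)) (Y / 2^(2^k)) < 2^k :=
    delta_lt_of_lt h1 (hi_lt hX) (hi_lt hY)
  have e1 : delta X Y = 2^k + delta (X / 2^(2^k)) (Y / 2^(2^k)) := delta_hi h1
  have hm : Y % 2^(2^k) ≠ Z % 2^(2^k) := by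
    intro hmm
    have hd1 := Nat.div_add_mod Y (2^(2^k))
    have hd2 := Nat.div_add_mod Z (2^(2^k))
    rw [h2] at hd1
    omega
  have e2 : delta Y Z = delta (Y % 2^(2^k)) (Z % 2^(2^k)) := delta_lo h2
  have d2lt : delta Y Z < 2^k := by
    rw [e2]
    exact delta_lt_of_lt hm (Nat.mod_lt _ (by positivity)) (Nat.mod_lt _ (by positivity))
  unfold phiColor
  rw [e1, Prod.mk.injEq]
  refine ⟨?_, ?_⟩
  · rw [delta_comm]
    apply delta_cross d2lt (by omega)
    rw [pow_succ]
    omega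
  · simp only [decide_eq_true_iff]
    omega

lemma phi_one_hi (h1 : X / 2^(2^k) = Y / 2^(2^k)) (h2 : Y / 2^(2^k) ≠ Z / 2^(2^k))
    (hXY : X < Y) (hY : Y < 2^(2^(k+1))) (hZ : Z < 2^(2^(k+1))) :
    phiColor X Y Z = (k, false) := by
  have d2lt : delta (Y / 2^(2^k)) (Z / 2^(2^k)) < 2^k :=
    delta_lt_of_lt h2 (hi_lt hY) (hi_lt hZ)
  have e2 : delta Y Z = 2^k + delta (Y / 2^(2^k)) (Z / 2^(2^k)) := delta_hi h2
  have hm : X % 2^(2^k) ≠ Y % 2^(2^k) := by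
    intro hmm
    have hd1 := Nat.div_add_mod X (2^(2^k))
    have hd2 := Nat.div_add_mod Y (2^(2^k))
    rw [h1] at hd1
    omega
  have e1 : delta X Y = delta (X % 2^(2^k)) (Y % 2^(2^k)) := delta_lo h1
  have d1lt : delta X Y < 2^k := by
    rw [e1]
    exact delta_lt_of_lt hm (Nat.mod_lt _ (by positivity)) (Nat.mod_lt _ (by positivity))
  unfold phiColor
  rw [e2, Prod.mk.injEq]
  refine ⟨?_, ?_⟩
  · apply delta_cross d1lt (by omega)
    rw [pow_succ]
    omega
  · simp only [decide_eq_false_iff_not]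
    omega

end PhiCases

lemma memU_mono' {G : ThreeGraph} : ∀ {i j : ℕ}, i ≤ j → MemU i G → MemU j G := by
  intro i j
  induction j with
  | zero =>
    intro h hm
    rw [Nat.le_zero] at h
    subst h
    exact hm
  | succ j ih =>
    intro h hm
    rcases Nat.lt_or_ge i (j+1) with h' | h'
    · exact MemU.mono j G (ih (by omega) hm)
    · have : i = j + 1 := by omega
      subst this; exact hm

lemma inU_reduce {G H F : ThreeGraph} (hred : Reducible G H F) (hH : InU H) (hF : InU F) :
    InU G := by
  obtain ⟨a, ha⟩ := hH
  obtain ⟨b, hb⟩ := hF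
  exact ⟨max a b + 2, MemU.reduce (max a b) G H F hred
    (memU_mono' (by omega) ha) (memU_mono' (by omega) hb)⟩

lemma inU_of_no_edges {G : ThreeGraph} (h : G.edges = ∅) : InU G := by
  refine ⟨0, MemU.zero G ⟨G.verts, ∅, ∅, ?_, ?_, ?_, by simp, ?_⟩⟩
  · simp
  · simp
  · simp
  · rw [h]; simp

lemma inU_of_inU1 {G : ThreeGraph} (h : InU1 G) : InU G := ⟨1, MemU.one G h⟩

lemma exists_sorted_triple {e : Finset ℕ} (f : ℕ → ℕ) (h3 : e.card = 3)
    (hinj : Set.InjOn f ↑e) :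
    ∃ x y z, e = {x, y, z} ∧ f x < f y ∧ f y < f z := by
  obtain ⟨a, b, c, hab, hac, hbc, rfl⟩ := Finset.card_eq_three.1 h3
  have ha : a ∈ ({a,b,c} : Finset ℕ) := by simp
  have hb : b ∈ ({a,b,c} : Finset ℕ) := by simp
  have hc : c ∈ ({a,b,c} : Finset ℕ) := by simp
  have fab : f a ≠ f b := fun h => hab (hinj ha hb h)
  have fac : f a ≠ f c := fun h => hac (hinj ha hc h)
  have fbc : f b ≠ f c := fun h => hbc (hinj hb hc h)
  have perm : ∀ x y z : ℕ, ({x,y,z} : Finset ℕ) = {a,b,c} →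
      f x < f y → f y < f z → ∃ x' y' z', ({a,b,c} : Finset ℕ) = {x',y',z'} ∧ f x' < f y' ∧ f y' < f z' :=
    fun x y z hp h1 h2 => ⟨x, y, z, hp.symm, h1, h2⟩
  rcases Nat.lt_or_ge (f a) (f b) with h1 | h1 <;> rcases Nat.lt_or_ge (f b) (f c) with h2 | h2 <;>
    rcases Nat.lt_or_ge (f a) (f c) with h3' | h3'
  · exact ⟨a, b, c, rfl, h1, h2⟩
  · exact ⟨a, b, c, rfl, h1, h2⟩
  · exact perm a c b (by ext w; simp; tauto) h3' (by omega)
  · exact perm c a b (by ext w; simp; tauto) (by omega) h1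
  · exact perm b a c (by ext w; simp; tauto) (by omega) h3'
  · exact perm b c a (by ext w; simp; tauto) (by omega) (by omega)
  · exact absurd h3' (by omega)
  · exact perm c b a (by ext w; simp; tauto) (by omega) (by omega)

lemma sorted_triple_eq {h : ℕ → ℕ} {x y z a b c : ℕ}
    (hs : ({x, y, z} : Finset ℕ) = {a, b, c})
    (h1 : h x < h y) (h2 : h y < h z) (h3 : h a < h b) (h4 : h b < h c) :
    x = a ∧ y = b ∧ z = c := by
  have hx : x ∈ ({a,b,c} : Finset ℕ) := by rw [← hs]; simp
  have hy : y ∈ ({a,b,c} : Finset ℕ) := by rw [← hs]; simp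
  have hz : z ∈ ({a,b,c} : Finset ℕ) := by rw [← hs]; simp
  simp only [Finset.mem_insert, Finset.mem_singleton] at hx hy hz
  rcases hx with rfl | rfl | rfl <;> rcases hy with rfl | rfl | rfl <;>
    rcases hz with rfl | rfl | rfl <;> first
      | exact ⟨rfl, rfl, rfl⟩
      | omega

lemma collapse_exists (G : ThreeGraph) (U : Finset ℕ) (v : ℕ)
    (hU : U ⊆ G.verts) (h2 : 2 ≤ U.card) (hlt : U.card < G.verts.card)
    (hcol : ∀ e ∈ G.edges, (e ∩ U).card ≠ 2) (hv : v ∉ G.verts) :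
    ∃ H F : ThreeGraph,
      Reducible G H F ∧
      H.verts = (G.verts \ U) ∪ {v} ∧
      H.edges = G.edges.filter (fun e => e ∩ U = ∅) ∪
        (G.edges.filter (fun e => (e ∩ U).card = 1)).image (fun e => (e \ U) ∪ {v}) ∧
      F.verts = U ∧ F.edges = G.edges.filter (fun e => e ⊆ U) := by
  have hcard : ∀ e ∈ G.edges, (e ∩ U).card = 1 → ((e \ U) ∪ {v}).card = 3 := by
    intro e he h1
    have hvne : v ∉ e \ U := by
      intro hmem
      exact hv (G.edge_sub e he (Finset.mem_sdiff.1 hmem).1)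
    rw [Finset.card_union_of_disjoint (Finset.disjoint_singleton_right.2 hvne),
      Finset.card_singleton]
    have := Finset.card_sdiff_add_card_inter e U
    have := G.edge_card e he
    omega
  refine ⟨⟨(G.verts \ U) ∪ {v},
      G.edges.filter (fun e => e ∩ U = ∅) ∪
        (G.edges.filter (fun e => (e ∩ U).card = 1)).image (fun e => (e \ U) ∪ {v}),
      ?_, ?_⟩,
    ⟨U, G.edges.filter (fun e => e ⊆ U), ?_, ?_⟩,
    ⟨U, v, hU, h2, hlt, hcol, hv, rfl, rfl, rfl, rfl⟩, rfl, rfl, rfl, rfl⟩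
  · intro e' he'
    rcases Finset.mem_union.1 he' with h | h
    · exact G.edge_card e' (Finset.mem_filter.1 h).1
    · obtain ⟨e, he, rfl⟩ := Finset.mem_image.1 h
      have := Finset.mem_filter.1 he
      exact hcard e this.1 this.2
  · intro e' he'
    rcases Finset.mem_union.1 he' with h | h
    · have hh := Finset.mem_filter.1 h
      intro w hw
      apply Finset.mem_union_left
      rw [Finset.mem_sdiff]
      refine ⟨G.edge_sub e' hh.1 hw, ?_⟩
      intro hwU
      have : w ∈ e' ∩ U := Finset.mem_inter.2 ⟨hw, hwU⟩
      rw [hh.2] at this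
      exact absurd this (Finset.notMem_empty w)
    · obtain ⟨e, he, rfl⟩ := Finset.mem_image.1 h
      have hh := Finset.mem_filter.1 he
      apply Finset.union_subset_union _ (le_refl {v})
      intro w hw
      rw [Finset.mem_sdiff] at hw ⊢
      exact ⟨G.edge_sub e hh.1 hw.1, hw.2⟩
  · intro e he
    exact G.edge_card e (Finset.mem_filter.1 he).1
  · intro e he
    exact (Finset.mem_filter.1 he).2

/-- Lemma A : if every edge consists of a pair in one `g`-class plus a vertex in a strictly
lower `g`-class, then `G ∈ 𝒰`. -/
lemma lemA : ∀ (n : ℕ) (G : ThreeGraph) (g : ℕ → ℕ), G.verts.card ≤ n →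
    (∀ e ∈ G.edges, ∃ x y z, e = {x, y, z} ∧ y ≠ z ∧ g x < g y ∧ g y = g z) →
    InU G := by
  intro n
  induction n with
  | zero =>
    intro G g hc _
    apply inU_of_no_edges
    rw [Finset.eq_empty_iff_forall_notMem]
    intro e he
    have h3 := G.edge_card e he
    have := Finset.card_le_card (G.edge_sub e he)
    omega
  | succ n ih =>
    intro G g hc hyp
    by_cases hE : G.edges = ∅
    · exact inU_of_no_edges hE
    obtain ⟨e0, he0⟩ := Finset.nonempty_iff_ne_empty.2 hE
    set T := G.verts.sup g with hT
    set U := G.verts.filter (fun w => g w ≠ T) with hUdef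
    have hUsub : U ⊆ G.verts := Finset.filter_subset _ _
    have hkey : ∀ e ∈ G.edges, (e ∩ U) = (e.filter (fun w => g w ≠ T)) := by
      intro e he
      ext w
      simp only [Finset.mem_inter, hUdef, Finset.mem_filter]
      constructor
      · rintro ⟨h1, _, h3⟩; exact ⟨h1, h3⟩
      · rintro ⟨h1, h3⟩; exact ⟨h1, G.edge_sub e he h1, h3⟩
    have hmain : ∀ e ∈ G.edges, (e ∩ U).card = 1 ∨ e ⊆ U := by
      intro e he
      obtain ⟨x, y, z, hexyz, hyz, hlt, heq⟩ := hyp e he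
      have hxe : x ∈ e := by rw [hexyz]; simp
      have hye : y ∈ e := by rw [hexyz]; simp
      have hze : z ∈ e := by rw [hexyz]; simp
      have hyT : g y ≤ T := Finset.le_sup (G.edge_sub e he hye)
      have hxU : g x ≠ T := by omega
      by_cases hgy : g y = T
      · left
        have : e ∩ U = {x} := by
          rw [hkey e he, hexyz]
          ext w
          simp only [Finset.mem_filter, Finset.mem_insert, Finset.mem_singleton]
          constructor
          · rintro ⟨rfl | rfl | rfl, hw⟩
            · rfl
            · omega
            · rw [← heq] at hw; omega
          · rintro rfl
            exact ⟨Or.inl rfl, hxU⟩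
        rw [this, Finset.card_singleton]
      · right
        rw [hexyz]
        intro w hw
        rw [hUdef, Finset.mem_filter]
        simp only [Finset.mem_insert, Finset.mem_singleton] at hw
        rcases hw with rfl | rfl | rfl
        · exact ⟨G.edge_sub e he hxe, hxU⟩
        · exact ⟨G.edge_sub e he hye, hgy⟩
        · exact ⟨G.edge_sub e he hze, by omega⟩
    have hvne : G.verts.Nonempty := by
      have h3 := G.edge_card e0 he0
      obtain ⟨w, hw⟩ := Finset.card_pos.1 (by omega : 0 < e0.card)
      exact ⟨w, G.edge_sub e0 he0 hw⟩
    obtain ⟨wT, hwT, hwTeq⟩ := Finset.exists_mem_eq_sup G.verts hvne g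
    have hwTU : wT ∉ U := by
      rw [hUdef, Finset.mem_filter]
      push_neg
      intro _
      omega
    have hUlt : U.card < G.verts.card :=
      Finset.card_lt_card (Finset.ssubset_iff_of_subset hUsub |>.2 ⟨wT, hwT, hwTU⟩)
    rcases Nat.lt_or_ge U.card 2 with hUsmall | hU2
    · -- U.card ≤ 1
      rcases hmain e0 he0 with h1 | h1
      · -- U is nonempty; so U.card = 1
        have hUpos : 0 < U.card := by
          rcases Finset.Nonempty.card_pos (s := e0 ∩ U) (by rw [Finset.card_pos.symm]; omega) with h
          have : e0 ∩ U ⊆ U := Finset.inter_subset_right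
          have := Finset.card_le_card this
          omega
        have hU1 : U.card = 1 := by omega
        apply inU_of_inU1
        refine ⟨U, hUsub, ?_⟩
        intro e he
        rcases hmain e he with h | h
        · exact h
        · exfalso
          have := Finset.card_le_card h
          have := G.edge_card e he
          omega
      · exfalso
        have := Finset.card_le_card h1
        have := G.edge_card e0 he0
        omega
    · -- collapse
      set v := G.verts.sup id + 1 with hvdef
      have hv : v ∉ G.verts := by
        intro hmem
        have : id v ≤ G.verts.sup id := Finset.le_sup hmem
        simp only [id] at this
        omega
      have hcol : ∀ e ∈ G.edges, (e ∩ U).card ≠ 2 := by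
        intro e he
        rcases hmain e he with h | h
        · omega
        · rw [Finset.inter_eq_left.2 h, G.edge_card e he]; omega
      obtain ⟨H, F, hred, hHv, hHe, hFv, hFe⟩ := collapse_exists G U v hUsub hU2 hUlt hcol hv
      apply inU_reduce hred
      · -- H ∈ 𝒰₁ with W = {v}
        apply inU_of_inU1
        refine ⟨{v}, ?_, ?_⟩
        · rw [hHv]; exact Finset.subset_union_right
        · intro e' he'
          rw [hHe] at he'
          rcases Finset.mem_union.1 he' with h | h
          · exfalso
            have hh := Finset.mem_filter.1 h
            rcases hmain e' hh.1 with h1 | h1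
            · rw [hh.2] at h1; simp at h1
            · have h3 := G.edge_card e' hh.1
              rw [Finset.inter_eq_left.2 h1] at hh
              rw [hh.2] at h3
              simp at h3
          · obtain ⟨e, he, rfl⟩ := Finset.mem_image.1 h
            have hh := Finset.mem_filter.1 he
            have hvne' : v ∉ e \ U := fun hmem =>
              hv (G.edge_sub e hh.1 (Finset.mem_sdiff.1 hmem).1)
            have : ((e \ U) ∪ {v}) ∩ {v} = {v} := by
              ext w
              simp only [Finset.mem_inter, Finset.mem_union, Finset.mem_singleton]
              constructor
              · rintro ⟨_, rfl⟩; rfl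
              · rintro rfl; exact ⟨Or.inr rfl, rfl⟩
            rw [this, Finset.card_singleton]
      · -- F ∈ 𝒰 by induction
        apply ih F g
        · rw [hFv]; omega
        · intro e he
          rw [hFe] at he
          exact hyp e (Finset.mem_filter.1 he).1

lemma div_lt_of_lt_div {X Y s : ℕ} (h : X / s < Y / s) : X < Y := by
  by_contra hc
  push_neg at hc
  exact absurd (Nat.div_le_div_right (c := s) hc) (by omega)

lemma mod_lt_mod {X Y s : ℕ} (h : X / s = Y / s) (hXY : X < Y) : X % s < Y % s := by
  have h1 := Nat.div_add_mod X s
  have h2 := Nat.div_add_mod Y s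
  rw [h] at h1
  omega

lemma lt_of_mod_lt {X Y s : ℕ} (h : X / s = Y / s) (hm : X % s < Y % s) : X < Y := by
  have h1 := Nat.div_add_mod X s
  have h2 := Nat.div_add_mod Y s
  rw [h] at h1
  omega

/-- Master pattern lemma for edges of a graph monochromatic under `φ` at level `k+1`. -/
lemma edge_pattern {k : ℕ} {G : ThreeGraph} {f : ℕ → ℕ} {c : ℕ × Bool}
    (hinj : Set.InjOn f ↑G.verts)
    (hrange : ∀ v ∈ G.verts, f v < 2^(2^(k+1)))
    (hmono : ∀ e ∈ G.edges, ∀ x ∈ e, ∀ y ∈ e, ∀ z ∈ e,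
      f x < f y → f y < f z → phiColor (f x) (f y) (f z) = c)
    {e : Finset ℕ} (he : e ∈ G.edges) :
    ∃ x y z, e = {x, y, z} ∧ f x < f y ∧ f y < f z ∧
      ((f x / 2^(2^k) = f y / 2^(2^k) ∧ f y / 2^(2^k) = f z / 2^(2^k) ∧
          phiColor (f x % 2^(2^k)) (f y % 2^(2^k)) (f z % 2^(2^k)) = c ∧ c.1 < k) ∨
       (f x / 2^(2^k) < f y / 2^(2^k) ∧ f y / 2^(2^k) < f z / 2^(2^k) ∧
          phiColor (f x / 2^(2^k)) (f y / 2^(2^k)) (f z / 2^(2^k)) = c ∧ c.1 < k) ∨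
       (f x / 2^(2^k) < f y / 2^(2^k) ∧ f y / 2^(2^k) = f z / 2^(2^k) ∧ c = (k, true)) ∨
       (f x / 2^(2^k) = f y / 2^(2^k) ∧ f y / 2^(2^k) < f z / 2^(2^k) ∧ c = (k, false))) := by
  have hsub : (↑e : Set ℕ) ⊆ ↑G.verts := by exact_mod_cast G.edge_sub e he
  obtain ⟨x, y, z, hexyz, h1, h2⟩ :=
    exists_sorted_triple f (G.edge_card e he) (hinj.mono hsub)
  have hx : x ∈ e := by rw [hexyz]; simp
  have hy : y ∈ e := by rw [hexyz]; simp
  have hz : z ∈ e := by rw [hexyz]; simp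
  have bx : f x < 2^(2^(k+1)) := hrange x (G.edge_sub e he hx)
  have by' : f y < 2^(2^(k+1)) := hrange y (G.edge_sub e he hy)
  have bz : f z < 2^(2^(k+1)) := hrange z (G.edge_sub e he hz)
  have hcol := hmono e he x hx y hy z hz h1 h2
  have hdxy : f x / 2^(2^k) ≤ f y / 2^(2^k) := Nat.div_le_div_right (by omega)
  have hdyz : f y / 2^(2^k) ≤ f z / 2^(2^k) := Nat.div_le_div_right (by omega)
  refine ⟨x, y, z, hexyz, h1, h2, ?_⟩
  by_cases exy : f x / 2^(2^k) = f y / 2^(2^k) <;>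
    by_cases eyz : f y / 2^(2^k) = f z / 2^(2^k)
  · left
    have hw := phi_within (k := k) exy eyz
    refine ⟨exy, eyz, by rw [← hw, hcol], ?_⟩
    have := phi_within_lt (k := k) (mod_lt_mod exy h1) (mod_lt_mod eyz h2)
      (Nat.mod_lt _ (by positivity)) (Nat.mod_lt _ (by positivity))
      (Nat.mod_lt _ (by positivity))
    rw [← hw, hcol] at this
    exact this
  · right; right; right
    exact ⟨exy, by omega, by rw [← hcol]; exact (phi_one_hi exy eyz h1 by' bz).symm ▸ rfl⟩
  · right; right; left
    exact ⟨by omega, eyz, by rw [← hcol]; exact (phi_one_lo exy eyz h2 bx by').symm ▸ rfl⟩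
  · right; left
    have hw := phi_cross (k := k) exy eyz bx by' bz
    refine ⟨by omega, by omega, by rw [← hw, hcol], ?_⟩
    have := phi_within_lt (k := k) (show f x / 2^(2^k) < f y / 2^(2^k) by omega)
      (show f y / 2^(2^k) < f z / 2^(2^k) by omega) (hi_lt bx) (hi_lt by') (hi_lt bz)
    rw [← hw, hcol] at this
    exact this

lemma mono_mod {k t : ℕ} {G : ThreeGraph} {f : ℕ → ℕ} {c : ℕ × Bool}
    (hsame : ∀ v ∈ G.verts, f v / 2^(2^k) = t)
    (hmono : ∀ e ∈ G.edges, ∀ x ∈ e, ∀ y ∈ e, ∀ z ∈ e,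
      f x < f y → f y < f z → phiColor (f x) (f y) (f z) = c) :
    ∀ e ∈ G.edges, ∀ x ∈ e, ∀ y ∈ e, ∀ z ∈ e,
      f x % 2^(2^k) < f y % 2^(2^k) → f y % 2^(2^k) < f z % 2^(2^k) →
      phiColor (f x % 2^(2^k)) (f y % 2^(2^k)) (f z % 2^(2^k)) = c := by
  intro e he x hx y hy z hz h1 h2
  have ex : f x / 2^(2^k) = t := hsame x (G.edge_sub e he hx)
  have ey : f y / 2^(2^k) = t := hsame y (G.edge_sub e he hy)
  have ez : f z / 2^(2^k) = t := hsame z (G.edge_sub e he hz)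
  have hxy : f x < f y := lt_of_mod_lt (by omega) h1
  have hyz : f y < f z := lt_of_mod_lt (by omega) h2
  rw [← phi_within (by omega) (by omega)]
  exact hmono e he x hx y hy z hz hxy hyz

set_option maxHeartbeats 2000000 in
lemma mainLemma : ∀ (k n : ℕ) (G : ThreeGraph) (f : ℕ → ℕ) (c : ℕ × Bool),
    G.verts.card ≤ n →
    Set.InjOn f ↑G.verts →
    (∀ v ∈ G.verts, f v < 2^(2^k)) →
    (∀ e ∈ G.edges, ∀ x ∈ e, ∀ y ∈ e, ∀ z ∈ e,
      f x < f y → f y < f z → phiColor (f x) (f y) (f z) = c) →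
    InU G := by
  intro k
  induction k with
  | zero =>
    intro n G f c _ hinj hrange _
    apply inU_of_no_edges
    rw [Finset.eq_empty_iff_forall_notMem]
    intro e he
    have hsub : (↑e : Set ℕ) ⊆ ↑G.verts := by exact_mod_cast G.edge_sub e he
    obtain ⟨x, y, z, hexyz, h1, h2⟩ :=
      exists_sorted_triple f (G.edge_card e he) (hinj.mono hsub)
    have hx : x ∈ e := by rw [hexyz]; simp
    have hz : z ∈ e := by rw [hexyz]; simp
    have := hrange x (G.edge_sub e he hx)
    have := hrange z (G.edge_sub e he hz)
    simp only [pow_zero, pow_one] at *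
    omega
  | succ k ihk =>
    intro n
    induction n with
    | zero =>
      intro G f c hc _ _ _
      apply inU_of_no_edges
      rw [Finset.eq_empty_iff_forall_notMem]
      intro e he
      have h3 := G.edge_card e he
      have := Finset.card_le_card (G.edge_sub e he)
      omega
    | succ n ihn =>
      intro G f c hc hinj hrange hmono
      by_cases hE : G.edges = ∅
      · exact inU_of_no_edges hE
      have hpat := fun {e} he => edge_pattern hinj hrange hmono (e := e) he
      by_cases hct : c = (k, true)
      · -- every edge: low singleton + high pair;  Lemma A with g = hi ∘ f
        apply lemA G.verts.card G (fun w => f w / 2^(2^k)) le_rfl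
        intro e he
        obtain ⟨x, y, z, hexyz, h1, h2, hp⟩ := hpat he
        rcases hp with ⟨_, _, _, hlt⟩ | ⟨_, _, _, hlt⟩ | ⟨ha, hb, _⟩ | ⟨_, _, hcf⟩
        · rw [hct] at hlt; omega
        · rw [hct] at hlt; omega
        · exact ⟨x, y, z, hexyz, by intro h; rw [h] at h2; omega, ha, hb⟩
        · rw [hcf] at hct; simp at hct
      by_cases hcf : c = (k, false)
      · -- every edge: low pair + high singleton; reverse the order
        set T := G.verts.sup (fun w => f w / 2^(2^k)) with hT
        apply lemA G.verts.card G (fun w => T - f w / 2^(2^k)) le_rfl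
        intro e he
        obtain ⟨x, y, z, hexyz, h1, h2, hp⟩ := hpat he
        rcases hp with ⟨_, _, _, hlt⟩ | ⟨_, _, _, hlt⟩ | ⟨_, _, hct'⟩ | ⟨ha, hb, _⟩
        · rw [hcf] at hlt; omega
        · rw [hcf] at hlt; omega
        · rw [hct'] at hcf; simp at hcf
        · have hze : z ∈ e := by rw [hexyz]; simp
          have hzT : f z / 2^(2^k) ≤ T :=
            Finset.le_sup (f := fun w => f w / 2^(2^k)) (G.edge_sub e he hze)
          refine ⟨z, x, y, ?_, by intro h; rw [h] at h1; omega, by omega, by omega⟩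
          rw [hexyz]; ext w; simp; tauto
      -- remaining: every edge within one block or across three blocks
      have hpat2 : ∀ {e}, e ∈ G.edges → ∃ x y z, e = {x, y, z} ∧ f x < f y ∧ f y < f z ∧
          ((f x / 2^(2^k) = f y / 2^(2^k) ∧ f y / 2^(2^k) = f z / 2^(2^k)) ∨
           (f x / 2^(2^k) < f y / 2^(2^k) ∧ f y / 2^(2^k) < f z / 2^(2^k) ∧
             phiColor (f x / 2^(2^k)) (f y / 2^(2^k)) (f z / 2^(2^k)) = c)) := by
        intro e he
        obtain ⟨x, y, z, hexyz, h1, h2, hp⟩ := hpat he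
        refine ⟨x, y, z, hexyz, h1, h2, ?_⟩
        rcases hp with ⟨ha, hb, _, _⟩ | ⟨ha, hb, hco, _⟩ | ⟨_, _, h⟩ | ⟨_, _, h⟩
        · exact Or.inl ⟨ha, hb⟩
        · exact Or.inr ⟨ha, hb, hco⟩
        · exact absurd h hct
        · exact absurd h hcf
      by_cases hsplit : ∃ t, 2 ≤ (G.verts.filter (fun w => f w / 2^(2^k) = t)).card ∧
          (G.verts.filter (fun w => f w / 2^(2^k) = t)).card < G.verts.card
      · -- collapse the block with value t
        obtain ⟨t, hU2, hUlt⟩ := hsplit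
        set U := G.verts.filter (fun w => f w / 2^(2^k) = t) with hUdef
        have hUsub : U ⊆ G.verts := Finset.filter_subset _ _
        have hUmem : ∀ w, w ∈ U ↔ w ∈ G.verts ∧ f w / 2^(2^k) = t := by
          intro w; rw [hUdef, Finset.mem_filter]
        set v := G.verts.sup id + 1 with hvdef
        have hv : v ∉ G.verts := by
          intro hmem
          have : id v ≤ G.verts.sup id := Finset.le_sup hmem
          simp only [id] at this
          omega
        have hcol : ∀ e ∈ G.edges, (e ∩ U).card ≠ 2 := by
          intro e he
          obtain ⟨x, y, z, hexyz, h1, h2, hp⟩ := hpat2 he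
          have hx : x ∈ e := by rw [hexyz]; simp
          have hy : y ∈ e := by rw [hexyz]; simp
          have hz : z ∈ e := by rw [hexyz]; simp
          rcases hp with ⟨ha, hb⟩ | ⟨ha, hb, _⟩
          · by_cases hxt : f x / 2^(2^k) = t
            · have : e ⊆ U := by
                rw [hexyz]
                intro w hw
                simp only [Finset.mem_insert, Finset.mem_singleton] at hw
                rcases hw with rfl | rfl | rfl <;>
                  rw [hUmem] <;> exact ⟨G.edge_sub e he (by rw [hexyz]; simp), by omega⟩
              rw [Finset.inter_eq_left.2 this, G.edge_card e he]
              omega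
            · have : e ∩ U = ∅ := by
                rw [Finset.eq_empty_iff_forall_notMem]
                intro w hw
                have hw1 := Finset.mem_inter.1 hw
                have := (hUmem w).1 hw1.2
                have hwe := hw1.1
                rw [hexyz] at hwe
                simp only [Finset.mem_insert, Finset.mem_singleton] at hwe
                rcases hwe with rfl | rfl | rfl <;> omega
              rw [this]
              simp
          · have : (e ∩ U).card ≤ 1 := by
              rw [Finset.card_le_one]
              intro w1 hw1 w2 hw2
              have m1 := Finset.mem_inter.1 hw1
              have m2 := Finset.mem_inter.1 hw2
              have e1 := ((hUmem w1).1 m1.2).2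
              have e2 := ((hUmem w2).1 m2.2).2
              have hwe1 := m1.1; have hwe2 := m2.1
              rw [hexyz] at hwe1 hwe2
              simp only [Finset.mem_insert, Finset.mem_singleton] at hwe1 hwe2
              rcases hwe1 with rfl | rfl | rfl <;> rcases hwe2 with rfl | rfl | rfl <;> omega
            omega
        obtain ⟨H, F, hred, hHv, hHe, hFv, hFe⟩ := collapse_exists G U v hUsub hU2 hUlt hcol hv
        have htS : t < 2^(2^k) := by
          obtain ⟨u, hu⟩ := Finset.card_pos.1 (by omega : 0 < U.card)
          have := (hUmem u).1 hu
          have := hi_lt (hrange u this.1)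
          omega
        apply inU_reduce hred
        · -- H by inner induction
          set fH := fun w => if w = v then t * 2^(2^k) else f w with hfH
          have hfHv : fH v = t * 2^(2^k) := by rw [hfH]; simp
          have hfHold : ∀ w ∈ G.verts, fH w = f w := by
            intro w hw
            have hwv : w ≠ v := fun hwv => absurd (hwv ▸ hw) hv
            simp only [hfH, if_neg hwv]
          have hHvmem : ∀ w, w ∈ H.verts ↔ (w ∈ G.verts ∧ w ∉ U) ∨ w = v := by
            intro w
            rw [hHv]
            simp [Finset.mem_sdiff]
            tauto
          have hdivtS : t * 2^(2^k) / 2^(2^k) = t := Nat.mul_div_cancel t (by positivity)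
          have hboundv : t * 2^(2^k) < 2^(2^(k+1)) := by
            have : 2^(2^(k+1)) = 2^(2^k) * 2^(2^k) := by
              rw [← pow_add]; congr 1; omega
            rw [this]
            exact Nat.mul_lt_mul_of_lt_of_le htS (le_refl _) (by positivity)
          have hrangeH : ∀ w ∈ H.verts, fH w < 2^(2^(k+1)) := by
            intro w hw
            rcases (hHvmem w).1 hw with ⟨hw1, _⟩ | rfl
            · rw [hfHold w hw1]; exact hrange w hw1
            · rw [hfHv]; exact hboundv
          have hinjH : Set.InjOn fH ↑H.verts := by
            intro w1 hw1 w2 hw2 heq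
            have hw1' := (hHvmem w1).1 (by exact_mod_cast hw1)
            have hw2' := (hHvmem w2).1 (by exact_mod_cast hw2)
            have hold : ∀ w, w ∈ G.verts → w ∉ U → fH w ≠ t * 2^(2^k) := by
              intro w hwv hwU hcontra
              rw [hfHold w hwv] at hcontra
              have : f w / 2^(2^k) = t := by rw [hcontra, hdivtS]
              exact hwU ((hUmem w).2 ⟨hwv, this⟩)
            rcases hw1' with ⟨h1a, h1b⟩ | rfl <;> rcases hw2' with ⟨h2a, h2b⟩ | rfl
            · rw [hfHold w1 h1a, hfHold w2 h2a] at heq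
              exact hinj (by exact_mod_cast h1a) (by exact_mod_cast h2a) heq
            · rw [hfHv] at heq; exact absurd heq (hold w1 h1a h1b)
            · rw [hfHv] at heq; exact absurd heq.symm (hold w2 h2a h2b)
            · rfl
          have hcardH : H.verts.card ≤ n := by
            rw [hHv]
            have h1 : ((G.verts \ U) ∪ {v}).card ≤ (G.verts \ U).card + 1 := by
              apply le_trans (Finset.card_union_le _ _)
              simp
            have h2 : (G.verts \ U).card = G.verts.card - U.card := Finset.card_sdiff_of_subset hUsub
            omega
          apply ihn H fH c hcardH hinjH hrangeH
          intro e' he' x' hx' y' hy' z' hz' hfH1 hfH2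
          rw [hHe] at he'
          rcases Finset.mem_union.1 he' with hcase | hcase
          · -- old edge, disjoint from U
            have hh := Finset.mem_filter.1 hcase
            have hmemG : ∀ w ∈ e', w ∈ G.verts := fun w hw => G.edge_sub e' hh.1 hw
            simp only [hfHold x' (hmemG x' hx'), hfHold y' (hmemG y' hy'),
              hfHold z' (hmemG z' hz')] at hfH1 hfH2 ⊢
            exact hmono e' hh.1 x' hx' y' hy' z' hz' hfH1 hfH2
          · -- collapsed edge
            obtain ⟨e, he, rfl⟩ := Finset.mem_image.1 hcase
            have hh := Finset.mem_filter.1 he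
            obtain ⟨x, y, z, hexyz, h1, h2, hp⟩ := hpat2 hh.1
            have hx : x ∈ e := by rw [hexyz]; simp
            have hy : y ∈ e := by rw [hexyz]; simp
            have hz : z ∈ e := by rw [hexyz]; simp
            have hxv : x ∈ G.verts := G.edge_sub e hh.1 hx
            have hyv : y ∈ G.verts := G.edge_sub e hh.1 hy
            have hzv : z ∈ G.verts := G.edge_sub e hh.1 hz
            -- the edge must be of cross type
            have he2 := hh.2
            rcases hp with ⟨ha, hb⟩ | ⟨ha, hb, hco⟩
            · exfalso
              by_cases hxt : f x / 2^(2^k) = t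
              · have hsubU : e ⊆ U := by
                  rw [hexyz]
                  intro w hw
                  simp only [Finset.mem_insert, Finset.mem_singleton] at hw
                  rcases hw with rfl | rfl | rfl <;>
                    exact (hUmem _).2 ⟨G.edge_sub e hh.1 (by rw [hexyz]; simp), by omega⟩
                rw [Finset.inter_eq_left.2 hsubU, G.edge_card e hh.1] at he2
                omega
              · have hempty : e ∩ U = ∅ := by
                  rw [Finset.eq_empty_iff_forall_notMem]
                  intro w hw
                  have hw1 := Finset.mem_inter.1 hw
                  have := (hUmem w).1 hw1.2
                  have hwe := hw1.1
                  rw [hexyz] at hwe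
                  simp only [Finset.mem_insert, Finset.mem_singleton] at hwe
                  rcases hwe with rfl | rfl | rfl <;> omega
                rw [hempty] at he2
                simp at he2
            -- identify the unique vertex of e in U
            obtain ⟨u, hu⟩ := Finset.card_eq_one.1 he2
            have hue : u ∈ e ∧ u ∈ U := by
              have : u ∈ e ∩ U := by rw [hu]; simp
              exact Finset.mem_inter.1 this
            have hnotU : ∀ w, w ∈ e → w ≠ u → w ∉ U := by
              intro w hw hwu hwU
              have : w ∈ e ∩ U := Finset.mem_inter.2 ⟨hw, hwU⟩
              rw [hu] at this
              simp at this
              exact hwu this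
            have hut : f u / 2^(2^k) = t := ((hUmem u).1 hue.2).2
            have hkey : ∃ a1 a2 a3 : ℕ, (e \ U) ∪ {v} = {a1, a2, a3} ∧
                fH a1 < fH a2 ∧ fH a2 < fH a3 ∧
                fH a1 / 2^(2^k) = f x / 2^(2^k) ∧ fH a2 / 2^(2^k) = f y / 2^(2^k) ∧
                fH a3 / 2^(2^k) = f z / 2^(2^k) ∧
                fH a1 < 2^(2^(k+1)) ∧ fH a2 < 2^(2^(k+1)) ∧ fH a3 < 2^(2^(k+1)) := by
              have hEU : ∀ w, w ∈ e \ U ↔ (w = x ∨ w = y ∨ w = z) ∧ w ∉ U := by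
                intro w
                rw [Finset.mem_sdiff, hexyz]
                simp only [Finset.mem_insert, Finset.mem_singleton]
              have hxu := hue.1
              rw [hexyz] at hxu
              simp only [Finset.mem_insert, Finset.mem_singleton] at hxu
              rcases hxu with rfl | rfl | rfl
              · -- u = x
                have hyU : y ∉ U := hnotU y hy (by intro hh'; rw [hh'] at h1; omega)
                have hzU : z ∉ U := hnotU z hz (by intro hh'; rw [hh'] at h2; omega)
                have hsd : (e \ U) ∪ {v} = {v, y, z} := by
                  ext w
                  simp only [Finset.mem_union, Finset.mem_singleton, hEU,
                    Finset.mem_insert, Finset.mem_singleton]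
                  constructor
                  · rintro (⟨rfl | rfl | rfl, hw⟩ | rfl)
                    · exact absurd hue.2 hw
                    · tauto
                    · tauto
                    · tauto
                  · rintro (rfl | rfl | rfl)
                    · tauto
                    · exact Or.inl ⟨by tauto, hyU⟩
                    · exact Or.inl ⟨by tauto, hzU⟩
                refine ⟨v, y, z, hsd, ?_, ?_, ?_, ?_, ?_, ?_, ?_, ?_⟩
                · rw [hfHv, hfHold y hyv]
                  exact div_lt_of_lt_div (by rw [hdivtS]; omega)
                · rw [hfHold y hyv, hfHold z hzv]; exact h2
                · rw [hfHv, hdivtS]; exact hut.symm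
                · rw [hfHold y hyv]
                · rw [hfHold z hzv]
                · rw [hfHv]; exact hboundv
                · rw [hfHold y hyv]; exact hrange y hyv
                · rw [hfHold z hzv]; exact hrange z hzv
              · -- u = y
                have hxU : x ∉ U := hnotU x hx (by intro hh'; rw [hh'] at h1; omega)
                have hzU : z ∉ U := hnotU z hz (by intro hh'; rw [hh'] at h2; omega)
                have hsd : (e \ U) ∪ {v} = {x, v, z} := by
                  ext w
                  simp only [Finset.mem_union, Finset.mem_singleton, hEU,
                    Finset.mem_insert, Finset.mem_singleton]
                  constructor
                  · rintro (⟨rfl | rfl | rfl, hw⟩ | rfl)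
                    · tauto
                    · exact absurd hue.2 hw
                    · tauto
                    · tauto
                  · rintro (rfl | rfl | rfl)
                    · exact Or.inl ⟨by tauto, hxU⟩
                    · tauto
                    · exact Or.inl ⟨by tauto, hzU⟩
                refine ⟨x, v, z, hsd, ?_, ?_, ?_, ?_, ?_, ?_, ?_, ?_⟩
                · rw [hfHold x hxv, hfHv]
                  exact div_lt_of_lt_div (by rw [hdivtS]; omega)
                · rw [hfHv, hfHold z hzv]
                  exact div_lt_of_lt_div (by rw [hdivtS]; omega)
                · rw [hfHold x hxv]
                · rw [hfHv, hdivtS]; exact hut.symm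
                · rw [hfHold z hzv]
                · rw [hfHold x hxv]; exact hrange x hxv
                · rw [hfHv]; exact hboundv
                · rw [hfHold z hzv]; exact hrange z hzv
              · -- u = z
                have hxU : x ∉ U := hnotU x hx (by intro hh'; rw [hh'] at h1; omega)
                have hyU : y ∉ U := hnotU y hy (by intro hh'; rw [hh'] at h2; omega)
                have hsd : (e \ U) ∪ {v} = {x, y, v} := by
                  ext w
                  simp only [Finset.mem_union, Finset.mem_singleton, hEU,
                    Finset.mem_insert, Finset.mem_singleton]
                  constructor
                  · rintro (⟨rfl | rfl | rfl, hw⟩ | rfl)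
                    · tauto
                    · tauto
                    · exact absurd hue.2 hw
                    · tauto
                  · rintro (rfl | rfl | rfl)
                    · exact Or.inl ⟨by tauto, hxU⟩
                    · exact Or.inl ⟨by tauto, hyU⟩
                    · tauto
                refine ⟨x, y, v, hsd, ?_, ?_, ?_, ?_, ?_, ?_, ?_, ?_⟩
                · rw [hfHold x hxv, hfHold y hyv]; exact h1
                · rw [hfHold y hyv, hfHv]
                  exact div_lt_of_lt_div (by rw [hdivtS]; omega)
                · rw [hfHold x hxv]
                · rw [hfHold y hyv]
                · rw [hfHv, hdivtS]; exact hut.symm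
                · rw [hfHold x hxv]; exact hrange x hxv
                · rw [hfHold y hyv]; exact hrange y hyv
                · rw [hfHv]; exact hboundv
            obtain ⟨a1, a2, a3, hsd, s1, s2, d1, d2, d3, b1, b2, b3⟩ := hkey
            -- identify x' y' z' with a1 a2 a3
            have hsub3 : ({x', y', z'} : Finset ℕ) ⊆ (e \ U) ∪ {v} := by
              intro w hw
              simp only [Finset.mem_insert, Finset.mem_singleton] at hw
              rcases hw with rfl | rfl | rfl <;> assumption
            have hcard3 : ({x', y', z'} : Finset ℕ).card = 3 := by
              rw [Finset.card_eq_three]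
              refine ⟨x', y', z', ?_, ?_, ?_, rfl⟩
              · intro h; rw [h] at hfH1; omega
              · intro h; rw [h] at hfH1; omega
              · intro h; rw [h] at hfH2; omega
            have hcarde : ((e \ U) ∪ {v}).card = 3 := H.edge_card _ (by
              rw [hHe]
              exact Finset.mem_union_right _ (Finset.mem_image_of_mem _ he))
            have heq3 : ({x', y', z'} : Finset ℕ) = (e \ U) ∪ {v} :=
              Finset.eq_of_subset_of_card_le hsub3 (by omega)
            rw [hsd] at heq3
            obtain ⟨rfl, rfl, rfl⟩ := sorted_triple_eq (h := fH) heq3 hfH1 hfH2 s1 s2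
            rw [phi_cross (k := k) (by omega) (by omega) b1 b2 b3, d1, d2, d3]
            exact hco
        · -- F by outer induction
          apply ihk F.verts.card F (fun w => f w % 2^(2^k)) c le_rfl
          · -- injectivity
            intro w1 hw1 w2 hw2 heq
            rw [hFv] at hw1 hw2
            have m1 := (hUmem w1).1 (by exact_mod_cast hw1)
            have m2 := (hUmem w2).1 (by exact_mod_cast hw2)
            have hd1 : 2^(2^k) * t + f w1 % 2^(2^k) = f w1 := by
              rw [← m1.2]; exact Nat.div_add_mod _ _
            have hd2 : 2^(2^k) * t + f w2 % 2^(2^k) = f w2 := by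
              rw [← m2.2]; exact Nat.div_add_mod _ _
            apply hinj (by exact_mod_cast m1.1) (by exact_mod_cast m2.1)
            have heq' : f w1 % 2^(2^k) = f w2 % 2^(2^k) := heq
            omega
          · intro w hw
            exact Nat.mod_lt _ (by positivity)
          · have hsame : ∀ w ∈ F.verts, f w / 2^(2^k) = t := by
              intro w hw
              rw [hFv] at hw
              exact ((hUmem w).1 hw).2
            have hmonoF : ∀ e ∈ F.edges, ∀ x ∈ e, ∀ y ∈ e, ∀ z ∈ e,
                f x < f y → f y < f z → phiColor (f x) (f y) (f z) = c := by
              intro e he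
              rw [hFe] at he
              exact hmono e (Finset.mem_filter.1 he).1
            exact mono_mod (G := F) hsame hmonoF
      · -- no collapsible block: all blocks singletons, or a single block
        push_neg at hsplit
        by_cases hginj : ∀ w1 ∈ G.verts, ∀ w2 ∈ G.verts,
            f w1 / 2^(2^k) = f w2 / 2^(2^k) → w1 = w2
        · -- hi is injective: use the quotient
          apply ihk G.verts.card G (fun w => f w / 2^(2^k)) c le_rfl ?_ ?_ ?_
          · intro w1 hw1 w2 hw2 heq
            exact hginj w1 (by exact_mod_cast hw1) w2 (by exact_mod_cast hw2) heq
          · intro w hw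
            exact hi_lt (hrange w hw)
          · intro e he x hx y hy z hz hg1 hg2
            have hg1' : f x / 2^(2^k) < f y / 2^(2^k) := hg1
            have hg2' : f y / 2^(2^k) < f z / 2^(2^k) := hg2
            have hfx : f x < f y := div_lt_of_lt_div hg1'
            have hfy : f y < f z := div_lt_of_lt_div hg2'
            rw [← phi_cross (by omega) (by omega) (hrange x (G.edge_sub e he hx))
              (hrange y (G.edge_sub e he hy)) (hrange z (G.edge_sub e he hz))]
            exact hmono e he x hx y hy z hz hfx hfy
        · -- two vertices share a block, so all vertices share one block
          push_neg at hginj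
          obtain ⟨w1, hw1, w2, hw2, heq, hne⟩ := hginj
          set t := f w1 / 2^(2^k) with ht
          have h2card : 2 ≤ (G.verts.filter (fun w => f w / 2^(2^k) = t)).card := by
            have : ({w1, w2} : Finset ℕ) ⊆ G.verts.filter (fun w => f w / 2^(2^k) = t) := by
              intro w hw
              simp only [Finset.mem_insert, Finset.mem_singleton] at hw
              rw [Finset.mem_filter]
              rcases hw with rfl | rfl
              · exact ⟨hw1, rfl⟩
              · exact ⟨hw2, heq.symm⟩
            have := Finset.card_le_card this
            rw [Finset.card_insert_of_notMem (by simpa using hne),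
              Finset.card_singleton] at this
            omega
          have hall : G.verts.filter (fun w => f w / 2^(2^k) = t) = G.verts := by
            apply Finset.eq_of_subset_of_card_le (Finset.filter_subset _ _)
            have := hsplit t h2card
            omega
          have hsame : ∀ w ∈ G.verts, f w / 2^(2^k) = t := by
            intro w hw
            have : w ∈ G.verts.filter (fun w => f w / 2^(2^k) = t) := by rw [hall]; exact hw
            exact (Finset.mem_filter.1 this).2
          apply ihk G.verts.card G (fun w => f w % 2^(2^k)) c le_rfl ?_ ?_ ?_
          · intro v1 hv1 v2 hv2 heq'
            have m1 := hsame v1 (by exact_mod_cast hv1)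
            have m2 := hsame v2 (by exact_mod_cast hv2)
            have hd1 : 2^(2^k) * t + f v1 % 2^(2^k) = f v1 := by
              rw [← m1]; exact Nat.div_add_mod _ _
            have hd2 : 2^(2^k) * t + f v2 % 2^(2^k) = f v2 := by
              rw [← m2]; exact Nat.div_add_mod _ _
            apply hinj hv1 hv2
            have heq'' : f v1 % 2^(2^k) = f v2 % 2^(2^k) := heq'
            omega
          · intro w hw
            exact Nat.mod_lt _ (by positivity)
          · exact mono_mod hsame hmono

/-- For every even `q ≥ 2`, if the coloring `φ_q` of the triples of
`{0, 1, …, 2^(2^(q/2)) − 1}` contains a monochromatic copy of a 3-graph `G` (i.e. there is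
an injection `f` of `V(G)` into `{0, …, 2^(2^(q/2)) − 1}` under which all edges of `G`
receive the same `φ_q`-color `c`), then `G ∈ 𝒰`. -/
theorem stmt4 (q : ℕ) (hq : 2 ≤ q) (hev : Even q) (G : ThreeGraph) (f : ℕ → ℕ)
    (hinj : Set.InjOn f ↑G.verts) (hrange : ∀ v ∈ G.verts, f v < 2 ^ 2 ^ (q / 2))
    (c : ℕ × Bool)
    (hmono : ∀ e ∈ G.edges, ∀ x ∈ e, ∀ y ∈ e, ∀ z ∈ e,
      f x < f y → f y < f z → phiColor (f x) (f y) (f z) = c) :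
    InU G := by
  exact mainLemma (q / 2) G.verts.card G f c le_rfl hinj hrange hmono
end

section
/- Let G_1, …, G_q be 3-graphs. For each i ∈ [q], let (H_i, F_i) be a pair to which G_i is reducible (by collapsing some collapsible set of G_i), and if G_i is not reducible to any pair, set H_i = G_i. Let h = max_{i ∈ [q]} v(H_i). Then r(G_1, …, G_q) ≤ r(H_1, …, H_q)^h · q · M, where M is the maximum of 1 and all the numbers r(G_1, …, G_{i-1}, F_i, G_{i+1}, …, G_q) over those i for which G_i is reducible. -/
open Finset

/-- Sequence-building lemma for stepping up uniformity. -/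
lemma seq_lemma (q k : ℕ) : ∀ (m t : ℕ), ∃ N : ℕ, ∀ (V : Finset ℕ) (χ : Finset ℕ → Fin q),
    N ≤ V.card → ∃ (a : ℕ → ℕ) (S : Finset ℕ),
      (∀ j < m, a j ∈ V) ∧ S ⊆ V ∧ t ≤ S.card ∧ (∀ j < m, a j ∉ S) ∧
      (∀ j l, j < l → l < m → a j ≠ a l) ∧
      (∀ j < m, ∀ T : Finset ℕ, T ⊆ (Finset.range j).image a → T.card = k →
        ∀ z, (z ∈ S ∨ ∃ l, j ≤ l ∧ l < m ∧ z = a l) → χ (insert z T) = χ (insert (a j) T)) := by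
  classical
  intro m
  induction m with
  | zero =>
    intro t
    exact ⟨t, fun V χ hV => ⟨fun _ => 0, V, by omega, le_refl _, hV, by omega, by omega,
      by omega⟩⟩
  | succ m ih =>
    intro t
    obtain ⟨N, hN⟩ := ih (q ^ (m.choose k) * (t + 1))
    refine ⟨N, fun V χ hV => ?_⟩
    obtain ⟨a, S, haV, hSV, hScard, haS, hdist, hINV⟩ := hN V χ hV
    have : Nonempty (Fin q) := ⟨χ ∅⟩
    set A : Finset ℕ := (Finset.range m).image a with hA
    have hainj : Set.InjOn a (Finset.range m) := by
      intro x hx y hy hxy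
      simp only [coe_range, Set.mem_Iio] at hx hy
      by_contra hne
      rcases Nat.lt_or_ge x y with h' | h'
      · exact hdist x y h' hy hxy
      · exact hdist y x (by omega) hx hxy.symm
    have hAcard : A.card = m := by
      rw [hA, card_image_of_injOn hainj, card_range]
    set P := A.powersetCard k with hP
    set κ : ℕ → (↥P → Fin q) := fun y T => χ (insert y (T : Finset ℕ)) with hκ
    have hcard : (univ : Finset (↥P → Fin q)).card * (t + 1) ≤ S.card := by
      have : (univ : Finset (↥P → Fin q)).card = q ^ (m.choose k) := by
        rw [card_univ, Fintype.card_fun, Fintype.card_fin, Fintype.card_coe,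
          card_powersetCard, hAcard]
      rw [this]; exact hScard
    obtain ⟨b, -, hb⟩ := Finset.exists_le_card_fiber_of_mul_le_card_of_maps_to
      (f := κ) (t := (univ : Finset (↥P → Fin q))) (fun x _ => mem_univ _)
      univ_nonempty hcard
    set F := S.filter (fun y => κ y = b) with hF
    have hFne : F.Nonempty := by
      apply card_pos.mp; omega
    obtain ⟨am, hamF⟩ := hFne
    have hamS : am ∈ S := (mem_filter.mp hamF).1
    refine ⟨Function.update a m am, F.erase am, ?_, ?_, ?_, ?_, ?_, ?_⟩
    · intro j hj
      rcases Nat.lt_or_ge j m with h' | h'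
      · rw [Function.update_of_ne (by omega)]; exact haV j h'
      · have hjm : j = m := by omega
        rw [hjm, Function.update_self]; exact hSV hamS
    · exact (erase_subset _ _).trans ((filter_subset _ _).trans hSV)
    · have := card_erase_of_mem hamF; omega
    · intro j hj
      rcases Nat.lt_or_ge j m with h' | h'
      · rw [Function.update_of_ne (by omega)]
        intro hmem
        exact haS j h' ((filter_subset _ _) (mem_of_mem_erase hmem))
      · have hjm : j = m := by omega
        rw [hjm, Function.update_self]; exact notMem_erase _ _
    · intro j l hjl hlm
      rcases Nat.lt_or_ge l m with h' | h'
      · rw [Function.update_of_ne (by omega : j ≠ m), Function.update_of_ne (by omega : l ≠ m)]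
        exact hdist j l hjl h'
      · have hlm : l = m := by omega
        rw [hlm, Function.update_of_ne (by omega : j ≠ m), Function.update_self]
        intro hc; exact haS j (by omega) (hc ▸ hamS)
    · intro j hj T hT hTcard z hz
      have himeq : (Finset.range j).image (Function.update a m am) =
          (Finset.range j).image a := by
        apply image_congr
        intro x hx
        simp only [coe_range, Set.mem_Iio] at hx
        rw [Function.update_of_ne (by omega)]
      rw [himeq] at hT
      rcases Nat.lt_or_ge j m with h' | h'
      · rw [Function.update_of_ne (by omega : j ≠ m)]
        apply hINV j h' T hT hTcard
        rcases hz with hz | ⟨l, hjl, hlm, rfl⟩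
        · exact Or.inl ((filter_subset _ _) (mem_of_mem_erase hz))
        · rcases Nat.lt_or_ge l m with h'' | h''
          · rw [Function.update_of_ne (by omega)]
            exact Or.inr ⟨l, hjl, h'', rfl⟩
          · have hlm' : l = m := by omega
            rw [hlm', Function.update_self]
            exact Or.inl hamS
      · have hjm : j = m := by omega
        rw [hjm, Function.update_self]
        have hTP : T ∈ P := by
          rw [hP, mem_powersetCard]
          exact ⟨by rw [hA]; exact hjm ▸ hT, hTcard⟩
        have key : ∀ y, κ y = b → χ (insert y T) = b ⟨T, hTP⟩ := by
          intro y hy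
          rw [← hy]
        have ham' : χ (insert am T) = b ⟨T, hTP⟩ :=
          key am (mem_filter.mp hamF).2
        rcases hz with hz | ⟨l, hjl, hlm, rfl⟩
        · rw [key z (mem_filter.mp (mem_of_mem_erase hz)).2, ham']
        · have : l = m := by omega
          rw [this, Function.update_self]

/-- `k`-uniform multicolour Ramsey property over subsets of `ℕ`. -/
def RamP (k : ℕ) : Prop := ∀ (q s : ℕ), ∃ N : ℕ, ∀ (V : Finset ℕ) (χ : Finset ℕ → Fin q),
  N ≤ V.card → ∃ (i : Fin q) (S : Finset ℕ), S ⊆ V ∧ s ≤ S.card ∧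
    ∀ t ⊆ S, t.card = k → χ t = i

lemma ramP_zero : RamP 0 := by
  intro q s
  exact ⟨s, fun V χ hV => ⟨χ ∅, V, le_refl _, hV, fun t _ ht => by
    rw [Finset.card_eq_zero.mp ht]⟩⟩

lemma ramP_succ (k : ℕ) (hk : RamP k) : RamP (k + 1) := by
  classical
  intro q s
  obtain ⟨m, hm⟩ := hk q s
  obtain ⟨N, hN⟩ := seq_lemma q k m 0
  refine ⟨N, fun V χ hV => ?_⟩
  obtain ⟨a, S, haV, -, -, -, hdist, hINV⟩ := hN V χ hV
  set A : Finset ℕ := (Finset.range m).image a with hA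
  have hainj : Set.InjOn a (Finset.range m) := by
    intro x hx y hy hxy
    simp only [Finset.coe_range, Set.mem_Iio] at hx hy
    by_contra hne
    rcases Nat.lt_or_ge x y with h' | h'
    · exact hdist x y h' hy hxy
    · exact hdist y x (by omega) hx hxy.symm
  have hAcard : A.card = m := by rw [hA, Finset.card_image_of_injOn hainj, Finset.card_range]
  have hAV : A ⊆ V := by
    intro x hx
    obtain ⟨j, hj, rfl⟩ := Finset.mem_image.mp hx
    exact haV j (Finset.mem_range.mp hj)
  set idx : Finset ℕ → ℕ := fun T => ((Finset.range m).filter (fun j => a j ∈ T)).sup (· + 1)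
    with hidx
  set χ' : Finset ℕ → Fin q := fun T => χ (insert (a (idx T)) T) with hχ'
  have key : ∀ T ⊆ A, T.card = k → ∀ l < m, (∀ j < m, a j ∈ T → j < l) →
      χ (insert (a l) T) = χ' T := by
    intro T hTA hTk l hlm hTl
    have hidxle : idx T ≤ l := by
      apply Finset.sup_le
      intro j hj
      rw [Finset.mem_filter, Finset.mem_range] at hj
      have := hTl j hj.1 hj.2
      omega
    have hTsub : T ⊆ (Finset.range (idx T)).image a := by
      intro x hx
      obtain ⟨j, hj, rfl⟩ := Finset.mem_image.mp (hTA hx)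
      rw [Finset.mem_range] at hj
      refine Finset.mem_image.mpr ⟨j, Finset.mem_range.mpr ?_, rfl⟩
      have : j + 1 ≤ idx T := Finset.le_sup (f := (· + 1))
        (Finset.mem_filter.mpr ⟨Finset.mem_range.mpr hj, hx⟩)
      omega
    exact hINV (idx T) (by omega) T hTsub hTk (a l) (Or.inr ⟨l, hidxle, hlm, rfl⟩)
  obtain ⟨i, S', hS'A, hS'card, hmono⟩ := hm A χ' (by omega)
  refine ⟨i, S', hS'A.trans hAV, hS'card, ?_⟩
  intro t ht htcard
  have htA : t ⊆ A := ht.trans hS'A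
  have htne : t.Nonempty := by
    apply Finset.card_pos.mp; omega
  set I : Finset ℕ := (Finset.range m).filter (fun j => a j ∈ t) with hI
  have hIne : I.Nonempty := by
    obtain ⟨x, hx⟩ := htne
    obtain ⟨j, hj, rfl⟩ := Finset.mem_image.mp (htA hx)
    exact ⟨j, Finset.mem_filter.mpr ⟨hj, hx⟩⟩
  set l : ℕ := I.max' hIne with hl
  have hlI : l ∈ I := Finset.max'_mem _ _
  have hlm : l < m := Finset.mem_range.mp (Finset.mem_filter.mp hlI).1
  have halt : a l ∈ t := (Finset.mem_filter.mp hlI).2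
  set T : Finset ℕ := t.erase (a l) with hT
  have hTcard : T.card = k := by
    rw [hT, Finset.card_erase_of_mem halt, htcard]
    omega
  have hTA : T ⊆ A := (Finset.erase_subset _ _).trans htA
  have hrw : insert (a l) T = t := Finset.insert_erase halt
  have : χ t = χ' T := by
    rw [← hrw]
    apply key T hTA hTcard l hlm
    intro j hj hjT
    have hjI : j ∈ I := Finset.mem_filter.mpr ⟨Finset.mem_range.mpr hj,
      Finset.mem_of_mem_erase hjT⟩
    have hjl : j ≤ l := Finset.le_max' _ _ hjI
    have hne : a j ≠ a l := Finset.ne_of_mem_erase hjT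
    rcases Nat.lt_or_ge j l with h' | h'
    · exact h'
    · exact absurd (by omega : j = l) (fun hc => hne (by rw [hc]))
  rw [this]
  exact hmono T ((Finset.erase_subset _ _).trans ht) hTcard

lemma ramP_three : RamP 3 := ramP_succ 2 (ramP_succ 1 (ramP_succ 0 ramP_zero))

lemma ramseyProp_exists {q : ℕ} (Gs : Fin q → ThreeGraph) (hq : 0 < q) :
    ∃ N, 0 < N ∧ RamseyProp Gs N := by
  classical
  set s : ℕ := Finset.univ.sup (fun i => (Gs i).verts.card) with hs
  obtain ⟨N₀, hN₀⟩ := ramP_three q s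
  refine ⟨max N₀ 1, by omega, ?_⟩
  set N := max N₀ 1 with hNdef
  have hN : 0 < N := by omega
  intro χ
  set e : ℕ → Fin N := fun x => ⟨x % N, Nat.mod_lt _ hN⟩ with he
  have heinj : ∀ x < N, ∀ y < N, e x = e y → x = y := by
    intro x hx y hy hxy
    have : x % N = y % N := congrArg Fin.val hxy
    rwa [Nat.mod_eq_of_lt hx, Nat.mod_eq_of_lt hy] at this
  set χ₀ : Finset ℕ → Fin q := fun T => χ (T.image e) with hχ₀
  obtain ⟨i, S, hSV, hScard, hmono⟩ := hN₀ (Finset.range N) χ₀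
    (by rw [Finset.card_range]; omega)
  refine ⟨i, ?_⟩
  have hvle : (Gs i).verts.card ≤ S.card :=
    le_trans (Finset.le_sup (f := fun i => (Gs i).verts.card) (Finset.mem_univ i)) hScard
  have : Fintype.card ↥(Gs i).verts ≤ Fintype.card ↥S := by
    simpa [Fintype.card_coe] using hvle
  obtain ⟨emb⟩ := Function.Embedding.nonempty_of_card_le this
  set f₀ : ℕ → ℕ := fun x => if hx : x ∈ (Gs i).verts then (emb ⟨x, hx⟩ : ℕ) else 0 with hf₀
  have hf₀S : ∀ x ∈ (Gs i).verts, f₀ x ∈ S := by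
    intro x hx
    simp only [hf₀, dif_pos hx]
    exact (emb ⟨x, hx⟩).2
  have hf₀inj : Set.InjOn f₀ ↑(Gs i).verts := by
    intro x hx y hy hxy
    simp only [Finset.mem_coe] at hx hy
    simp only [hf₀, dif_pos hx, dif_pos hy] at hxy
    have := emb.injective (Subtype.ext hxy)
    exact congrArg Subtype.val this
  refine ⟨e ∘ f₀, ?_, ?_⟩
  · intro x hx y hy hxy
    apply hf₀inj hx hy
    apply heinj _ (Finset.mem_range.mp (hSV (hf₀S x hx))) _
      (Finset.mem_range.mp (hSV (hf₀S y hy))) hxy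
  · intro ed hed
    have hsub : ed ⊆ (Gs i).verts := (Gs i).edge_sub ed hed
    have him : ed.image (e ∘ f₀) = (ed.image f₀).image e := by
      rw [Finset.image_image]
    rw [him]
    have : χ₀ (ed.image f₀) = i := by
      apply hmono
      · intro y hy
        obtain ⟨x, hx, rfl⟩ := Finset.mem_image.mp hy
        exact hf₀S x (hsub hx)
      · rw [Finset.card_image_of_injOn (hf₀inj.mono (by exact_mod_cast hsub)),
          (Gs i).edge_card ed hed]
    exact this

lemma ramseyProp_mem {q : ℕ} (Gs : Fin q → ThreeGraph) (hq : 0 < q) :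
    RamseyProp Gs (ramseyNumber Gs) := by
  obtain ⟨N, -, hN⟩ := ramseyProp_exists Gs hq
  exact Nat.sInf_mem (⟨N, hN⟩ : {N | RamseyProp Gs N}.Nonempty)

lemma ramseyNumber_pos {q : ℕ} (Gs : Fin q → ThreeGraph) (hq : 0 < q) :
    0 < ramseyNumber Gs := by
  rcases Nat.eq_zero_or_pos (ramseyNumber Gs) with h0 | h
  · exfalso
    have := ramseyProp_mem Gs hq
    rw [h0] at this
    obtain ⟨i, f, -, -⟩ := this (fun _ => ⟨0, hq⟩)
    exact (f 0).elim0
  · exact h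

lemma ramseyNumber_le {q : ℕ} (Gs : Fin q → ThreeGraph) {N : ℕ} (hN : RamseyProp Gs N) :
    ramseyNumber Gs ≤ N := Nat.sInf_le hN

lemma desc_ineq (nn NN : ℕ) (hnN : nn ≤ NN) :
    ∀ v : ℕ, nn.descFactorial v * NN ^ v ≤ NN.descFactorial v * nn ^ v := by
  intro v
  induction v with
  | zero => simp
  | succ v ih =>
    rw [Nat.descFactorial_succ, Nat.descFactorial_succ, pow_succ, pow_succ]
    have hterm : (nn - v) * NN ≤ (NN - v) * nn := by
      rcases le_or_gt v nn with hv | hv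
      · have hv' : v ≤ NN := hv.trans hnN
        zify [hv, hv']
        nlinarith [Int.ofNat_le.mpr hnN]
      · rw [Nat.sub_eq_zero_of_le (le_of_lt hv)]
        simp
    calc (nn - v) * nn.descFactorial v * (NN ^ v * NN)
        = ((nn - v) * NN) * (nn.descFactorial v * NN ^ v) := by ring
      _ ≤ ((NN - v) * nn) * (NN.descFactorial v * nn ^ v) :=
          Nat.mul_le_mul hterm ih
      _ = (NN - v) * NN.descFactorial v * (nn ^ v * nn) := by ring

lemma choose_pow_ineq (nn NN : ℕ) (hnN : nn ≤ NN) (v : ℕ) :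
    nn.choose v * NN ^ v ≤ NN.choose v * nn ^ v := by
  have h := desc_ineq nn NN hnN v
  rw [Nat.descFactorial_eq_factorial_mul_choose, Nat.descFactorial_eq_factorial_mul_choose] at h
  rw [mul_assoc, mul_assoc] at h
  exact Nat.le_of_mul_le_mul_left h (Nat.factorial_pos v)

/-- Let `G₁, …, G_q` be 3-graphs; for each `i`, either `Gᵢ` is reducible to
the chosen pair `(Hᵢ, Fᵢ)`, or `Gᵢ` is not reducible to any pair and `Hᵢ = Gᵢ`. Let
`h = maxᵢ v(Hᵢ)` and let `M` be any number which is at least `1` and at least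
`r(G₁, …, G_{i-1}, Fᵢ, G_{i+1}, …, G_q)` for every `i` for which `Gᵢ` is reducible (in
particular, the maximum of these quantities). Then
`r(G₁, …, G_q) ≤ r(H₁, …, H_q) ^ h · q · M`. -/
theorem stmt6 (q : ℕ) (Gs Hs Fs : Fin q → ThreeGraph)
    (hpair : ∀ i, Reducible (Gs i) (Hs i) (Fs i) ∨
      (Hs i = Gs i ∧ ∀ H F : ThreeGraph, ¬ Reducible (Gs i) H F))
    (h : ℕ) (hh : h = Finset.univ.sup fun i => (Hs i).verts.card)
    (M : ℕ) (hM1 : 1 ≤ M)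
    (hM : ∀ i, Reducible (Gs i) (Hs i) (Fs i) →
      ramseyNumber (Function.update Gs i (Fs i)) ≤ M) :
    ramseyNumber Gs ≤ ramseyNumber Hs ^ h * q * M := by
  classical
  rcases Nat.eq_zero_or_pos q with hq0 | hq
  · subst hq0
    have h0 : RamseyProp Gs 0 := fun χ => (χ ∅).elim0
    exact le_trans (ramseyNumber_le Gs h0) (Nat.zero_le _)
  set n := ramseyNumber Hs with hn
  have hn1 : 1 ≤ n := ramseyNumber_pos Hs hq
  have hRn : RamseyProp Hs n := ramseyProp_mem Hs hq
  set N := n ^ h * q * M with hNdef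
  have hN0 : 0 < N := by
    have : 0 < n ^ h := Nat.pow_pos hn1
    positivity
  rcases Nat.eq_zero_or_pos h with hh0 | hh1
  · -- h = 0 : all Hᵢ, hence all Gᵢ, are empty
    have hverts : ∀ i, (Hs i).verts.card = 0 := by
      intro i
      have := hh ▸ Finset.le_sup (f := fun i => (Hs i).verts.card) (Finset.mem_univ i)
      omega
    apply ramseyNumber_le
    intro χ
    set i₀ : Fin q := ⟨0, hq⟩
    have hHG : Hs i₀ = Gs i₀ := by
      rcases hpair i₀ with hred | ⟨heq, -⟩
      · exfalso
        obtain ⟨U, v, -, -, -, -, -, hHverts, -⟩ := hred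
        have hv : v ∈ (Hs i₀).verts := by
          rw [hHverts]; exact Finset.mem_union_right _ (Finset.mem_singleton_self _)
        have := Finset.card_pos.mpr ⟨v, hv⟩
        have := hverts i₀
        omega
      · exact heq
    have hGverts : (Gs i₀).verts = ∅ := by
      rw [← hHG]; exact Finset.card_eq_zero.mp (hverts i₀)
    refine ⟨i₀, fun _ => ⟨0, hN0⟩, ?_, ?_⟩
    · rw [hGverts]; simp
    · intro e he
      exfalso
      have h1 := (Gs i₀).edge_sub e he
      have h2 := (Gs i₀).edge_card e he
      rw [hGverts, Finset.subset_empty] at h1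
      rw [h1] at h2
      simp at h2
  -- main case
  have hNn : n ≤ N := by
    calc n = n ^ 1 := (pow_one n).symm
    _ ≤ n ^ h := Nat.pow_le_pow_right hn1 hh1
    _ ≤ n ^ h * q * M := by
        have : 1 ≤ q * M := Nat.mul_le_mul hq hM1
        calc n ^ h = n ^ h * 1 := (mul_one _).symm
        _ ≤ n ^ h * (q * M) := Nat.mul_le_mul_left _ this
        _ = n ^ h * q * M := (mul_assoc _ _ _).symm
  apply ramseyNumber_le
  intro χ
  set junk : Fin N := ⟨0, hN0⟩ with hjunk
  set i₀ : Fin q := ⟨0, hq⟩ with hi₀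
  -- Step 1: every `n`-subset contains a monochromatic copy of some `Hs i`
  have step1 : ∀ S : Finset (Fin N), S.card = n → ∃ p : Fin q × (ℕ → Fin N),
      Set.InjOn p.2 ↑(Hs p.1).verts ∧ (∀ x ∈ (Hs p.1).verts, p.2 x ∈ S) ∧
      (∀ e ∈ (Hs p.1).edges, χ (e.image p.2) = p.1) ∧
      (∀ x, x ∉ (Hs p.1).verts → p.2 x = junk) := by
    intro S hS
    set φ : Fin n → Fin N := fun j => ((S.orderIsoOfFin hS) j : Fin N) with hφ
    have hφinj : Function.Injective φ := fun x y hxy => by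
      have := (S.orderIsoOfFin hS).injective (Subtype.ext hxy)
      exact this
    have hφS : ∀ j, φ j ∈ S := fun j => ((S.orderIsoOfFin hS) j).2
    obtain ⟨i, f, hfinj, hfmono⟩ := hRn (fun T => χ (T.image φ))
    set g : ℕ → Fin N := fun x => if x ∈ (Hs i).verts then φ (f x) else junk with hg
    have hgagree : ∀ x ∈ (Hs i).verts, g x = φ (f x) := by
      intro x hx
      simp only [hg, if_pos hx]
    refine ⟨(i, g), ?_, ?_, ?_, ?_⟩ <;> dsimp only
    · intro x hx y hy hxy
      simp only [Finset.mem_coe] at hx hy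
      rw [hgagree x hx, hgagree y hy] at hxy
      exact hfinj hx hy (hφinj hxy)
    · intro x hx
      rw [hgagree x hx]
      exact hφS _
    · intro e he
      have hsub := (Hs i).edge_sub e he
      have him : e.image g = (e.image f).image φ := by
        rw [Finset.image_image]
        exact Finset.image_congr (fun x hx => hgagree x (hsub hx))
      have := hfmono e he
      simp only at this
      rw [him]
      exact this
    · intro x hx
      simp only [hg, if_neg hx]
  set c : Finset (Fin N) → Fin q × (ℕ → Fin N) :=
    fun S => if hS : S.card = n then (step1 S hS).choose else (i₀, fun _ => junk) with hc
  have hcP : ∀ S : Finset (Fin N), S.card = n →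
      Set.InjOn (c S).2 ↑(Hs (c S).1).verts ∧ (∀ x ∈ (Hs (c S).1).verts, (c S).2 x ∈ S) ∧
      (∀ e ∈ (Hs (c S).1).edges, χ (e.image (c S).2) = (c S).1) ∧
      (∀ x, x ∉ (Hs (c S).1).verts → (c S).2 x = junk) := by
    intro S hS
    simp only [hc, dif_pos hS]
    exact (step1 S hS).choose_spec
  set 𝒮 : Finset (Finset (Fin N)) := (Finset.univ : Finset (Fin N)).powersetCard n with h𝒮
  have hmem𝒮 : ∀ S, S ∈ 𝒮 ↔ S.card = n := by
    intro S
    rw [h𝒮, Finset.mem_powersetCard]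
    exact ⟨fun h => h.2, fun h => ⟨Finset.subset_univ _, h⟩⟩
  have h𝒮card : 𝒮.card = N.choose n := by
    rw [h𝒮, Finset.card_powersetCard, Finset.card_univ, Fintype.card_fin]
  set K : Finset (Fin q × (ℕ → Fin N)) := 𝒮.image c with hK
  set cnt : Fin q → ℕ := fun i => (K.filter (fun p => p.1 = i)).card with hcnt
  set Wc : Fin q → ℕ :=
    fun i => (N - (Hs i).verts.card).choose (n - (Hs i).verts.card) with hWc
  -- fiber bound
  have fib_bound : ∀ p ∈ K, (𝒮.filter (fun S => c S = p)).card ≤ Wc p.1 := by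
    intro p hpK
    obtain ⟨S₀, hS₀, rfl⟩ := Finset.mem_image.mp hpK
    have hS₀n : S₀.card = n := (hmem𝒮 S₀).mp hS₀
    obtain ⟨hinj, hmemS, -, -⟩ := hcP S₀ hS₀n
    set R : Finset (Fin N) := (Hs (c S₀).1).verts.image (c S₀).2 with hR
    have hRcard : R.card = (Hs (c S₀).1).verts.card := Finset.card_image_of_injOn hinj
    have hRsub : ∀ S ∈ 𝒮.filter (fun S => c S = c S₀), R ⊆ S := by
      intro S hS
      obtain ⟨hS𝒮, hSc⟩ := Finset.mem_filter.mp hS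
      obtain ⟨-, hmemS', -, -⟩ := hcP S ((hmem𝒮 S).mp hS𝒮)
      intro y hy
      rw [hR, ← hSc] at hy
      obtain ⟨x, hx, rfl⟩ := Finset.mem_image.mp hy
      exact hmemS' x hx
    have hle : (𝒮.filter (fun S => c S = c S₀)).card ≤
        ((Finset.univ \ R).powersetCard (n - R.card)).card := by
      apply Finset.card_le_card_of_injOn (fun S => S \ R)
      · intro S hS
        obtain ⟨hS𝒮, -⟩ := Finset.mem_filter.mp hS
        rw [Finset.mem_coe, Finset.mem_powersetCard]
        refine ⟨Finset.sdiff_subset_sdiff (Finset.subset_univ _) (le_refl _), ?_⟩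
        rw [Finset.card_sdiff_of_subset (hRsub S hS), (hmem𝒮 S).mp hS𝒮]
      · intro S1 hS1 S2 hS2 hEq
        dsimp only at hEq
        have h1 : S1 = (S1 \ R) ∪ R := (Finset.sdiff_union_of_subset
          (hRsub S1 (by exact_mod_cast hS1))).symm
        have h2 : S2 = (S2 \ R) ∪ R := (Finset.sdiff_union_of_subset
          (hRsub S2 (by exact_mod_cast hS2))).symm
        rw [h1, h2, hEq]
    calc (𝒮.filter (fun S => c S = c S₀)).card
        ≤ ((Finset.univ \ R).powersetCard (n - R.card)).card := hle
      _ = Wc (c S₀).1 := by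
          rw [Finset.card_powersetCard, Finset.card_sdiff_of_subset (Finset.subset_univ _),
            Finset.card_univ, Fintype.card_fin, hRcard]
  -- total count
  have total : N.choose n ≤ ∑ i : Fin q, cnt i * Wc i := by
    have h1 : 𝒮.card = ∑ p ∈ K, (𝒮.filter (fun S => c S = p)).card :=
      Finset.card_eq_sum_card_fiberwise (fun S hS => Finset.mem_image_of_mem c hS)
    have h2 : ∑ p ∈ K, (𝒮.filter (fun S => c S = p)).card ≤ ∑ p ∈ K, Wc p.1 :=
      Finset.sum_le_sum fib_bound
    have h3 : ∑ p ∈ K, Wc p.1 = ∑ i : Fin q, ∑ p ∈ K.filter (fun p => p.1 = i), Wc p.1 :=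
      (Finset.sum_fiberwise_of_maps_to (fun p _ => Finset.mem_univ p.1) _).symm
    have h4 : ∀ i : Fin q, ∑ p ∈ K.filter (fun p => p.1 = i), Wc p.1 = cnt i * Wc i := by
      intro i
      rw [Finset.sum_congr rfl (fun p hp => by rw [(Finset.mem_filter.mp hp).2]),
        Finset.sum_const, smul_eq_mul]
    calc N.choose n = 𝒮.card := h𝒮card.symm
      _ = ∑ p ∈ K, (𝒮.filter (fun S => c S = p)).card := h1
      _ ≤ ∑ p ∈ K, Wc p.1 := h2
      _ = ∑ i : Fin q, ∑ p ∈ K.filter (fun p => p.1 = i), Wc p.1 := h3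
      _ = ∑ i : Fin q, cnt i * Wc i := Finset.sum_congr rfl (fun i _ => h4 i)
  -- some colour has many copies
  have hex : ∃ i : Fin q, N.choose n ≤ q * (cnt i * Wc i) := by
    by_contra hcon
    push_neg at hcon
    have hlt : ∀ i : Fin q, q * (cnt i * Wc i) + 1 ≤ N.choose n := fun i => hcon i
    have hsum : q * ∑ i : Fin q, cnt i * Wc i ≤ q * (N.choose n - 1) := by
      rw [Finset.mul_sum]
      calc ∑ i : Fin q, q * (cnt i * Wc i) ≤ ∑ _i : Fin q, (N.choose n - 1) :=
            Finset.sum_le_sum (fun i _ => by have := hlt i; omega)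
        _ = q * (N.choose n - 1) := by
            rw [Finset.sum_const, smul_eq_mul, Finset.card_univ, Fintype.card_fin]
    have hCpos : 0 < N.choose n := Nat.choose_pos hNn
    have : q * N.choose n ≤ q * (N.choose n - 1) :=
      le_trans (Nat.mul_le_mul_left q total) hsum
    have := Nat.le_of_mul_le_mul_left this hq
    omega
  -- some colour has many copies
  obtain ⟨i, hi⟩ := hex
  set v : ℕ := (Hs i).verts.card with hv
  have hvh : v ≤ h := hh ▸ Finset.le_sup (f := fun i => (Hs i).verts.card) (Finset.mem_univ i)
  have hCpos : 0 < N.choose n := Nat.choose_pos hNn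
  have hcnt1 : 1 ≤ cnt i := by
    rcases Nat.eq_zero_or_pos (cnt i) with h0 | h1
    · rw [h0, zero_mul, mul_zero] at hi; omega
    · exact h1
  -- a copy of `Hs i` exists; in particular `v ≤ n`
  have hKi : ∃ p ∈ K, p.1 = i := by
    have : (K.filter (fun p => p.1 = i)).Nonempty :=
      Finset.card_pos.mp (lt_of_lt_of_le zero_lt_one hcnt1)
    obtain ⟨p, hp⟩ := this
    exact ⟨p, (Finset.mem_filter.mp hp).1, (Finset.mem_filter.mp hp).2⟩
  have hvn : v ≤ n := by
    obtain ⟨p, hpK, hpi⟩ := hKi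
    obtain ⟨S₀, hS₀, rfl⟩ := Finset.mem_image.mp hpK
    have hS₀n : S₀.card = n := (hmem𝒮 S₀).mp hS₀
    obtain ⟨hinj, hmemS, -, -⟩ := hcP S₀ hS₀n
    calc v = (Hs i).verts.card := rfl
    _ = ((Hs (c S₀).1).verts.image (c S₀).2).card := by
        rw [hpi, Finset.card_image_of_injOn (hpi ▸ hinj)]
    _ ≤ S₀.card := Finset.card_le_card (fun y hy => by
        obtain ⟨x, hx, rfl⟩ := Finset.mem_image.mp hy
        exact hmemS x hx)
    _ = n := hS₀n
  -- the key counting estimate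
  have hWcpos : 0 < Wc i := Nat.choose_pos (by omega : n - v ≤ N - v)
  have hWci : Wc i = (N - v).choose (n - v) := rfl
  have ha1 : N.choose v * Wc i ≤ (q * cnt i * n.choose v) * Wc i := by
    calc N.choose v * Wc i = N.choose n * n.choose v := by
          rw [hWci, ← Nat.choose_mul hvn]
      _ ≤ (q * (cnt i * Wc i)) * n.choose v := Nat.mul_le_mul_right _ hi
      _ = (q * cnt i * n.choose v) * Wc i := by ring
  have hA : N.choose v ≤ q * cnt i * n.choose v :=
    Nat.le_of_mul_le_mul_right ha1 hWcpos
  have hB : N ^ v ≤ q * cnt i * n ^ v := by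
    have h1 : n.choose v * N ^ v ≤ N.choose v * n ^ v := choose_pow_ineq n N hNn v
    have h2 : (N ^ v) * n.choose v ≤ (q * cnt i * n ^ v) * n.choose v := by
      calc (N ^ v) * n.choose v = n.choose v * N ^ v := by ring
        _ ≤ N.choose v * n ^ v := h1
        _ ≤ (q * cnt i * n.choose v) * n ^ v := Nat.mul_le_mul_right _ hA
        _ = (q * cnt i * n ^ v) * n.choose v := by ring
    exact Nat.le_of_mul_le_mul_right h2 (Nat.choose_pos hvn)
  rcases hpair i with hred | ⟨hHGeq, hnored⟩
  · -- reducible case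
    have hr'M : ramseyNumber (Function.update Gs i (Fs i)) ≤ M := hM i hred
    have hRr' : RamseyProp (Function.update Gs i (Fs i))
        (ramseyNumber (Function.update Gs i (Fs i))) := ramseyProp_mem _ hq
    obtain ⟨U, vstar, hUsub, hU2, hUlt, hUno2, hvG, hHverts, hHedges, hFverts, hFedges⟩ := hred
    have hvmem : vstar ∈ (Hs i).verts := by
      rw [hHverts]; exact Finset.mem_union_right _ (Finset.mem_singleton_self _)
    have hv1 : 1 ≤ v := Finset.card_pos.mpr ⟨vstar, hvmem⟩
    have hcnt_big : N ^ (v - 1) * M ≤ cnt i := by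
      have hNle : N ^ v ≤ q * cnt i * n ^ h :=
        le_trans hB (Nat.mul_le_mul_left _ (Nat.pow_le_pow_right hn1 hvh))
      have key : N ^ (v - 1) * (n ^ h * q * M) ≤ q * cnt i * n ^ h := by
        rw [← hNdef, ← pow_succ, Nat.sub_add_cancel hv1]
        exact hNle
      have h3 : (N ^ (v - 1) * M) * (n ^ h * q) ≤ cnt i * (n ^ h * q) := by
        calc (N ^ (v - 1) * M) * (n ^ h * q) = N ^ (v - 1) * (n ^ h * q * M) := by ring
          _ ≤ q * cnt i * n ^ h := key
          _ = cnt i * (n ^ h * q) := by ring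
      exact Nat.le_of_mul_le_mul_right h3
        (Nat.mul_pos (Nat.pow_pos hn1) hq)
    set Ki := K.filter (fun p => p.1 = i) with hKidef
    set β : (Fin q × (ℕ → Fin N)) → (ℕ → Fin N) :=
      fun p => Function.update p.2 vstar junk with hβ
    set ext2 : (↥((Hs i).verts.erase vstar) → Fin N) → (ℕ → Fin N) :=
      fun g x => if hx : x ∈ (Hs i).verts.erase vstar then g ⟨x, hx⟩ else junk with hext2
    set B := (Finset.univ : Finset (↥((Hs i).verts.erase vstar) → Fin N)).image ext2 with hBdef
    have hBcard : B.card ≤ N ^ (v - 1) := by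
      calc B.card ≤ (Finset.univ : Finset (↥((Hs i).verts.erase vstar) → Fin N)).card :=
            Finset.card_image_le
        _ = N ^ (v - 1) := by
            rw [Finset.card_univ, Fintype.card_fun, Fintype.card_fin, Fintype.card_coe,
              Finset.card_erase_of_mem hvmem, hv]
    have hKiprop : ∀ p ∈ Ki, Set.InjOn p.2 ↑(Hs i).verts ∧
        (∀ e ∈ (Hs i).edges, χ (e.image p.2) = i) ∧
        (∀ x, x ∉ (Hs i).verts → p.2 x = junk) := by
      intro p hp
      obtain ⟨hpK, hpi⟩ := Finset.mem_filter.mp hp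
      obtain ⟨S₀, hS₀, rfl⟩ := Finset.mem_image.mp hpK
      obtain ⟨h1, -, h3, h4⟩ := hcP S₀ ((hmem𝒮 S₀).mp hS₀)
      rw [hpi] at h1 h3 h4
      exact ⟨h1, h3, h4⟩
    have hmaps : ∀ p ∈ Ki, β p ∈ B := by
      intro p hp
      obtain ⟨-, -, h4⟩ := hKiprop p hp
      rw [hBdef, Finset.mem_image]
      refine ⟨fun y => p.2 ↑y, Finset.mem_univ _, ?_⟩
      funext x
      simp only [hext2, hβ]
      by_cases hx : x ∈ (Hs i).verts.erase vstar
      · rw [dif_pos hx, Function.update_of_ne (Finset.ne_of_mem_erase hx)]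
      · rw [dif_neg hx]
        by_cases hxv : x = vstar
        · rw [hxv, Function.update_self]
        · have hxnv : x ∉ (Hs i).verts := fun hmem => hx (Finset.mem_erase.mpr ⟨hxv, hmem⟩)
          rw [Function.update_of_ne hxv, h4 x hxnv]
    have hKicard : B.card * M ≤ Ki.card := by
      calc B.card * M ≤ N ^ (v - 1) * M := Nat.mul_le_mul_right _ hBcard
        _ ≤ cnt i := hcnt_big
        _ = Ki.card := rfl
    have hBne : B.Nonempty :=
      ⟨ext2 (fun _ => junk), Finset.mem_image_of_mem _ (Finset.mem_univ _)⟩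
    obtain ⟨b, -, hbM⟩ :=
      Finset.exists_le_card_fiber_of_mul_le_card_of_maps_to hmaps hBne hKicard
    set Fi := Ki.filter (fun p => β p = b) with hFidef
    have hβinj : Set.InjOn (fun p : Fin q × (ℕ → Fin N) => p.2 vstar) ↑Fi := by
      intro p hp p' hp' hEq
      dsimp only at hEq
      have hp1 := Finset.mem_filter.mp (Finset.mem_coe.mp hp)
      have hp'1 := Finset.mem_filter.mp (Finset.mem_coe.mp hp')
      have hb1 : β p = b := hp1.2
      have hb2 : β p' = b := hp'1.2
      have hi1 : p.1 = i := (Finset.mem_filter.mp hp1.1).2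
      have hi2 : p'.1 = i := (Finset.mem_filter.mp hp'1.1).2
      have hsnd : p.2 = p'.2 := by
        funext x
        by_cases hx : x = vstar
        · rw [hx]; exact hEq
        · have h2 : Function.update p.2 vstar junk x = Function.update p'.2 vstar junk x :=
            congrFun (hb1.trans hb2.symm) x
          rwa [Function.update_of_ne hx, Function.update_of_ne hx] at h2
      exact Prod.ext (hi1.trans hi2.symm) hsnd
    set W := Fi.image (fun p : Fin q × (ℕ → Fin N) => p.2 vstar) with hWdef
    have hWcard : M ≤ W.card := by
      rw [hWdef, Finset.card_image_of_injOn hβinj]; exact hbM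
    have hWne : W.Nonempty := Finset.card_pos.mp (by omega)
    have hWprop : ∀ w ∈ W, Set.InjOn (Function.update b vstar w) ↑(Hs i).verts ∧
        ∀ e ∈ (Hs i).edges, χ (e.image (Function.update b vstar w)) = i := by
      intro w hw
      obtain ⟨p, hpFi, rfl⟩ := Finset.mem_image.mp hw
      have hpKi : p ∈ Ki := (Finset.mem_filter.mp hpFi).1
      have hpb : β p = b := (Finset.mem_filter.mp hpFi).2
      obtain ⟨h1, h2, -⟩ := hKiprop p hpKi
      have hgb : Function.update b vstar (p.2 vstar) = p.2 := by
        funext x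
        by_cases hx : x = vstar
        · rw [hx, Function.update_self]
        · rw [Function.update_of_ne hx, ← hpb]
          exact show Function.update p.2 vstar junk x = p.2 x from Function.update_of_ne hx _ _
      rw [hgb]
      exact ⟨h1, h2⟩
    have hbW : ∀ w ∈ W, ∀ x ∈ (Hs i).verts, x ≠ vstar → b x ≠ w := by
      intro w hw x hx hxv hEq
      obtain ⟨h1, -⟩ := hWprop w hw
      have e1 : Function.update b vstar w x = Function.update b vstar w vstar := by
        rw [Function.update_of_ne hxv, Function.update_self, hEq]
      exact hxv (h1 (Finset.mem_coe.mpr hx) (Finset.mem_coe.mpr hvmem) e1)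
    have hbinj : ∀ x ∈ (Hs i).verts, ∀ y ∈ (Hs i).verts,
        x ≠ vstar → y ≠ vstar → b x = b y → x = y := by
      intro x hx y hy hxv hyv hEq
      obtain ⟨w, hw⟩ := hWne
      obtain ⟨h1, -⟩ := hWprop w hw
      apply h1 (Finset.mem_coe.mpr hx) (Finset.mem_coe.mpr hy)
      rw [Function.update_of_ne hxv, Function.update_of_ne hyv]
      exact hEq
    obtain ⟨W', hW'sub, hW'card⟩ :=
      Finset.exists_subset_card_eq
        (show ramseyNumber (Function.update Gs i (Fs i)) ≤ W.card by omega)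
    set ψ : Fin (ramseyNumber (Function.update Gs i (Fs i))) → Fin N :=
      fun j => ((W'.orderIsoOfFin hW'card) j : Fin N) with hψ
    have hψinj : Function.Injective ψ := fun x y hxy => by
      have := (W'.orderIsoOfFin hW'card).injective (Subtype.ext hxy)
      exact this
    have hψW : ∀ j, ψ j ∈ W := fun j => hW'sub ((W'.orderIsoOfFin hW'card) j).2
    obtain ⟨i', f', hf'inj, hf'mono⟩ := hRr' (fun T => χ (T.image ψ))
    by_cases hii : i' = i
    · subst hii
      rw [Function.update_self] at hf'inj hf'mono
      set fF : ℕ → Fin N := fun x => ψ (f' x) with hfF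
      have hfFinj : Set.InjOn fF ↑(Fs i').verts := fun x hx y hy hxy =>
        hf'inj hx hy (hψinj hxy)
      have hfFW : ∀ x, fF x ∈ W := fun x => hψW _
      have hfFmono : ∀ e ∈ (Fs i').edges, χ (e.image fF) = i' := by
        intro e he
        have := hf'mono e he
        dsimp only at this
        rw [Finset.image_image] at this
        exact this
      refine ⟨i', (fun x => if x ∈ U then fF x else b x), ?_, ?_⟩
      · -- injectivity
        intro x hx y hy hxy
        simp only [Finset.mem_coe] at hx hy
        dsimp only at hxy
        have hGH : ∀ z, z ∈ (Gs i').verts → z ∉ U → z ∈ (Hs i').verts ∧ z ≠ vstar := by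
          intro z hz hzU
          constructor
          · rw [hHverts]
            exact Finset.mem_union_left _ (Finset.mem_sdiff.mpr ⟨hz, hzU⟩)
          · intro hEq; exact hvG (hEq ▸ hz)
        by_cases hxU : x ∈ U <;> by_cases hyU : y ∈ U
        · rw [if_pos hxU, if_pos hyU] at hxy
          exact hfFinj (by rw [hFverts]; exact Finset.mem_coe.mpr hxU)
            (by rw [hFverts]; exact Finset.mem_coe.mpr hyU) hxy
        · rw [if_pos hxU, if_neg hyU] at hxy
          exfalso
          obtain ⟨hyH, hyv⟩ := hGH y hy hyU
          exact hbW (fF x) (hfFW x) y hyH hyv hxy.symm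
        · rw [if_neg hxU, if_pos hyU] at hxy
          exfalso
          obtain ⟨hxH, hxv⟩ := hGH x hx hxU
          exact hbW (fF y) (hfFW y) x hxH hxv hxy
        · rw [if_neg hxU, if_neg hyU] at hxy
          obtain ⟨hxH, hxv⟩ := hGH x hx hxU
          obtain ⟨hyH, hyv⟩ := hGH y hy hyU
          exact hbinj x hxH y hyH hxv hyv hxy
      · -- edges
        intro e he
        have hcard3 := (Gs i').edge_card e he
        have hesub := (Gs i').edge_sub e he
        have hcap := hUno2 e he
        have hle3 : (e ∩ U).card ≤ 3 :=
          hcard3 ▸ Finset.card_le_card Finset.inter_subset_left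
        have hxnv : ∀ x ∈ e, x ≠ vstar := fun x hx hEq => hvG (hEq ▸ hesub hx)
        have hcases : (e ∩ U).card = 0 ∨ (e ∩ U).card = 1 ∨ (e ∩ U).card = 3 := by omega
        rcases hcases with h0 | h1 | h3
        · obtain ⟨w₀, hw₀⟩ := hWne
          have hU0 : e ∩ U = ∅ := Finset.card_eq_zero.mp h0
          have hnotU : ∀ x ∈ e, x ∉ U := fun x hx hxU =>
            Finset.notMem_empty x (hU0 ▸ Finset.mem_inter.mpr ⟨hx, hxU⟩)
          have heH : e ∈ (Hs i').edges := by
            rw [hHedges]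
            exact Finset.mem_union_left _ (Finset.mem_filter.mpr ⟨he, hU0⟩)
          obtain ⟨-, h2⟩ := hWprop w₀ hw₀
          have hcol := h2 e heH
          have him : e.image (fun x => if x ∈ U then fF x else b x) =
              e.image (Function.update b vstar w₀) := by
            apply Finset.image_congr
            intro x hx
            dsimp only
            rw [if_neg (hnotU x (Finset.mem_coe.mp hx)),
              Function.update_of_ne (hxnv x (Finset.mem_coe.mp hx))]
          rw [him]
          exact hcol
        · obtain ⟨u, hu⟩ := Finset.card_eq_one.mp h1
          have huIn : u ∈ e ∩ U := hu ▸ Finset.mem_singleton_self u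
          have hue : u ∈ e := (Finset.mem_inter.mp huIn).1
          have huU : u ∈ U := (Finset.mem_inter.mp huIn).2
          have hwW : fF u ∈ W := hfFW u
          have heH : (e \ U) ∪ {vstar} ∈ (Hs i').edges := by
            rw [hHedges]
            apply Finset.mem_union_right
            exact Finset.mem_image.mpr ⟨e, Finset.mem_filter.mpr ⟨he, h1⟩, rfl⟩
          obtain ⟨-, h2⟩ := hWprop (fF u) hwW
          have hcol := h2 _ heH
          have him : e.image (fun x => if x ∈ U then fF x else b x) =
              ((e \ U) ∪ {vstar}).image (Function.update b vstar (fF u)) := by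
            rw [Finset.image_union, Finset.image_singleton, Function.update_self]
            conv_lhs => rw [← Finset.sdiff_union_inter e U]
            rw [Finset.image_union, hu, Finset.image_singleton, if_pos huU]
            congr 1
            apply Finset.image_congr
            intro x hx
            dsimp only
            have hx' := Finset.mem_coe.mp hx
            have hxU : x ∉ U := (Finset.mem_sdiff.mp hx').2
            have hxe : x ∈ e := (Finset.mem_sdiff.mp hx').1
            rw [if_neg hxU, Function.update_of_ne (hxnv x hxe)]
          rw [him]
          exact hcol
        · have hUe : e ∩ U = e :=
            Finset.eq_of_subset_of_card_le Finset.inter_subset_left (by omega)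
          have hesubU : e ⊆ U := Finset.inter_eq_left.mp hUe
          have heF : e ∈ (Fs i').edges := by
            rw [hFedges]; exact Finset.mem_filter.mpr ⟨he, hesubU⟩
          have hcol := hfFmono e heF
          have him : e.image (fun x => if x ∈ U then fF x else b x) = e.image fF := by
            apply Finset.image_congr
            intro x hx
            dsimp only
            rw [if_pos (hesubU (Finset.mem_coe.mp hx))]
          rw [him]
          exact hcol
    · rw [Function.update_of_ne hii] at hf'inj hf'mono
      refine ⟨i', fun x => ψ (f' x), fun x hx y hy hxy => hf'inj hx hy (hψinj hxy), ?_⟩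
      intro e he
      have := hf'mono e he
      dsimp only at this
      rw [Finset.image_image] at this
      exact this
  · -- non-reducible case: one copy suffices
    obtain ⟨p, hpK, hpi⟩ := hKi
    obtain ⟨S₀, hS₀, rfl⟩ := Finset.mem_image.mp hpK
    have hS₀n : S₀.card = n := (hmem𝒮 S₀).mp hS₀
    obtain ⟨hinj, -, hmono, -⟩ := hcP S₀ hS₀n
    refine ⟨i, (c S₀).2, ?_, ?_⟩
    · rw [← hHGeq]; exact hpi ▸ hinj
    · intro e he
      rw [← hHGeq] at he
      have := hmono e (by rw [hpi]; exact he)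
      rw [this, hpi]
end
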